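/- arXiv:2604.01821 — 9 statements merged into one kernel-verified Lean document; each statement's English description precedes it below -/
import Mathlib

section
/- Let X be a measurable space, n ∈ ℕ, 𝔻 a probability measure on X, and f = T(P₀, P₁) a trade-off function given by probability measures P₀, P₁ on some measurable space. If an algorithm A is f-DP, then for every n and every probability measure 𝔻 on X, A is f_{n,𝔻}-WMIP. -/
open MeasureTheory ProbabilityTheory
open scoped ProbabilityTheory NNReal ENNReal

/-- The trade-off function `T(P,Q)(α) = inf {∫ (1-φ) dQ : φ a test with ∫ φ dP ≤ α}`,
where a test is a measurable function with values in `[0,1]`. -/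
noncomputable def tradeoff {Ω : Type*} [MeasurableSpace Ω] (P Q : Measure Ω) (α : ℝ) : ℝ :=
  sInf { r : ℝ | ∃ φ : Ω → ℝ, Measurable φ ∧ (∀ ω, 0 ≤ φ ω) ∧ (∀ ω, φ ω ≤ 1) ∧
    (∫ ω, φ ω ∂P) ≤ α ∧ r = ∫ ω, (1 - φ ω) ∂Q }

/-- Two datasets are adjacent if they differ in at most one coordinate. -/
def Adjacent {X : Type*} {n : ℕ} (D D' : Fin n → X) : Prop :=
  ∃ i : Fin n, ∀ j : Fin n, j ≠ i → D j = D' j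

/-- An algorithm (Markov kernel on datasets) is `f`-DP if `T(A(D), A(D')) ≥ f` on `[0,1]`
for every pair of adjacent datasets. -/
def fDP {X Y : Type*} [MeasurableSpace X] [MeasurableSpace Y] {n : ℕ}
    (A : Kernel (Fin n → X) Y) (f : ℝ → ℝ) : Prop :=
  ∀ D D' : Fin n → X, Adjacent D D' → ∀ α ∈ Set.Icc (0 : ℝ) 1, f α ≤ tradeoff (A D) (A D') α

/-- `Pin x A 𝔻`: the output distribution of `A` on a dataset consisting of the target
record `x` together with `n-1` i.i.d. records from `𝔻`. -/
noncomputable def Pin {X Y : Type*} [MeasurableSpace X] [MeasurableSpace Y] {n : ℕ}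
    (hn : 0 < n) (x : X) (A : Kernel (Fin n → X) Y) (𝔻 : Measure X) : Measure Y :=
  (Measure.pi fun _ : Fin n => 𝔻).bind (fun D => A (Function.update D ⟨0, hn⟩ x))

/-- `Pout A 𝔻`: the output distribution of `A` on a dataset of `n` i.i.d. records from `𝔻`. -/
noncomputable def Pout {X Y : Type*} [MeasurableSpace X] [MeasurableSpace Y] {n : ℕ}
    (A : Kernel (Fin n → X) Y) (𝔻 : Measure X) : Measure Y :=
  (Measure.pi fun _ : Fin n => 𝔻).bind (fun D => A D)

/-- `A` is `f`-worst-case membership inference private (WMIP) w.r.t. dataset size `n`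
and distribution `𝔻` if `T(Pout, Pin x) ≥ f` on `[0,1]` for every `x`. -/
def WMIP {X Y : Type*} [MeasurableSpace X] [MeasurableSpace Y] {n : ℕ}
    (hn : 0 < n) (A : Kernel (Fin n → X) Y) (f : ℝ → ℝ) (𝔻 : Measure X) : Prop :=
  ∀ x : X, ∀ α ∈ Set.Icc (0 : ℝ) 1, f α ≤ tradeoff (Pout A 𝔻) (Pin hn x A 𝔻) α

namespace TOff


variable {Ω : Type*} [MeasurableSpace Ω] (P Q : Measure Ω)

def tset (P Q : Measure Ω) (α : ℝ) : Set ℝ :=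
  { r : ℝ | ∃ φ : Ω → ℝ, Measurable φ ∧ (∀ ω, 0 ≤ φ ω) ∧ (∀ ω, φ ω ≤ 1) ∧
    (∫ ω, φ ω ∂P) ≤ α ∧ r = ∫ ω, (1 - φ ω) ∂Q }

lemma tradeoff_eq (α : ℝ) : tradeoff P Q α = sInf (tset P Q α) := rfl

lemma tset_bddBelow (α : ℝ) : BddBelow (tset P Q α) := by
  refine ⟨0, fun r hr => ?_⟩
  obtain ⟨φ, _, _, h1, _, hr⟩ := hr
  exact hr ▸ integral_nonneg (fun ω => by simpa using sub_nonneg.mpr (h1 ω))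

lemma tradeoff_nonneg (α : ℝ) : 0 ≤ tradeoff P Q α := by
  refine Real.sInf_nonneg fun r hr => ?_
  obtain ⟨φ, _, _, h1, _, hr⟩ := hr
  exact hr ▸ integral_nonneg (fun ω => by simpa using sub_nonneg.mpr (h1 ω))

lemma tset_nonempty [IsProbabilityMeasure P] {α : ℝ} (hα : 0 ≤ α) :
    (tset P Q α).Nonempty := by
  refine ⟨∫ ω, (1 - min α 1) ∂Q, fun _ => min α 1, measurable_const,
    fun ω => le_min hα zero_le_one, fun ω => min_le_right _ _, ?_, rfl⟩
  simp [min_le_left α 1]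

lemma tradeoff_le {α : ℝ} {φ : Ω → ℝ} (hm : Measurable φ) (h0 : ∀ ω, 0 ≤ φ ω)
    (h1 : ∀ ω, φ ω ≤ 1) (hint : (∫ ω, φ ω ∂P) ≤ α) :
    tradeoff P Q α ≤ ∫ ω, (1 - φ ω) ∂Q :=
  csInf_le (tset_bddBelow P Q α) ⟨φ, hm, h0, h1, hint, rfl⟩

lemma tradeoff_antitone [IsProbabilityMeasure P] {a b : ℝ} (ha : 0 ≤ a) (hab : a ≤ b) :
    tradeoff P Q b ≤ tradeoff P Q a := by
  refine csInf_le_csInf (tset_bddBelow P Q b) (tset_nonempty P Q ha) fun r hr => ?_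
  obtain ⟨φ, hm, h0, h1, hint, hr⟩ := hr
  exact ⟨φ, hm, h0, h1, hint.trans hab, hr⟩

lemma integrable01 {Q : Measure Ω} [IsFiniteMeasure Q] {φ : Ω → ℝ} (hm : Measurable φ)
    (h0 : ∀ ω, 0 ≤ φ ω) (h1 : ∀ ω, φ ω ≤ 1) : Integrable φ Q := by
  refine (integrable_const (1 : ℝ)).mono' hm.aestronglyMeasurable ?_
  exact Filter.Eventually.of_forall fun ω => abs_le.mpr ⟨by linarith [h0 ω], h1 ω⟩

lemma tradeoff_convexOn [IsProbabilityMeasure P] [IsProbabilityMeasure Q] :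
    ConvexOn ℝ (Set.Icc (0:ℝ) 1) (tradeoff P Q) := by
  refine ⟨convex_Icc _ _, fun a ha b hb ta tb hta htb htab => ?_⟩
  simp only [smul_eq_mul]
  refine le_of_forall_gt_imp_ge_of_dense fun d hd => ?_
  set ε : ℝ := d - (ta * tradeoff P Q a + tb * tradeoff P Q b) with hεdef
  have hε : 0 < ε := by simp only [hεdef]; linarith
  obtain ⟨r₁, hr₁S, hr₁⟩ := Real.lt_sInf_add_pos (tset_nonempty P Q ha.1) hε
  obtain ⟨r₂, hr₂S, hr₂⟩ := Real.lt_sInf_add_pos (tset_nonempty P Q hb.1) hε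
  obtain ⟨φ₁, hm₁, h01, h11, hint₁, hrr₁⟩ := hr₁S
  obtain ⟨φ₂, hm₂, h02, h12, hint₂, hrr₂⟩ := hr₂S
  have hi₁ : Integrable φ₁ P := integrable01 hm₁ h01 h11
  have hi₂ : Integrable φ₂ P := integrable01 hm₂ h02 h12
  have hj₁ : Integrable (fun ω => 1 - φ₁ ω) Q :=
    integrable01 (measurable_const.sub hm₁) (fun ω => by linarith [h11 ω])
      (fun ω => by linarith [h01 ω])
  have hj₂ : Integrable (fun ω => 1 - φ₂ ω) Q :=
    integrable01 (measurable_const.sub hm₂) (fun ω => by linarith [h12 ω])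
      (fun ω => by linarith [h02 ω])
  have hmem : ta * r₁ + tb * r₂ ∈ tset P Q (ta * a + tb * b) := by
    refine ⟨fun ω => ta * φ₁ ω + tb * φ₂ ω, (hm₁.const_mul ta).add (hm₂.const_mul tb),
      fun ω => add_nonneg (mul_nonneg hta (h01 ω)) (mul_nonneg htb (h02 ω)),
      fun ω => ?_, ?_, ?_⟩
    · calc ta * φ₁ ω + tb * φ₂ ω ≤ ta * 1 + tb * 1 :=
            add_le_add (mul_le_mul_of_nonneg_left (h11 ω) hta)
              (mul_le_mul_of_nonneg_left (h12 ω) htb)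
        _ = 1 := by linarith
    · rw [integral_add (hi₁.const_mul ta) (hi₂.const_mul tb), integral_const_mul,
        integral_const_mul]
      exact add_le_add (mul_le_mul_of_nonneg_left hint₁ hta)
        (mul_le_mul_of_nonneg_left hint₂ htb)
    · have : (fun ω => 1 - (ta * φ₁ ω + tb * φ₂ ω)) =
          fun ω => ta * (1 - φ₁ ω) + tb * (1 - φ₂ ω) := by
        funext ω; ring_nf; linarith
      rw [hrr₁, hrr₂, this, integral_add (hj₁.const_mul ta) (hj₂.const_mul tb),
        integral_const_mul, integral_const_mul]
  calc tradeoff P Q (ta * a + tb * b) ≤ ta * r₁ + tb * r₂ :=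
        csInf_le (tset_bddBelow P Q _) hmem
    _ ≤ ta * (tradeoff P Q a + ε) + tb * (tradeoff P Q b + ε) :=
        add_le_add (mul_le_mul_of_nonneg_left hr₁.le hta)
          (mul_le_mul_of_nonneg_left hr₂.le htb)
    _ = ta * tradeoff P Q a + tb * tradeoff P Q b + (ta + tb) * ε := by ring
    _ = d := by rw [htab, hεdef]; ring

lemma jensen {W : Type*} [MeasurableSpace W] (μ : Measure W) [IsProbabilityMeasure μ]
    {f : ℝ → ℝ} (hconv : ConvexOn ℝ (Set.Icc (0:ℝ) 1) f) {g : W → ℝ}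
    (hgm : Measurable g) (hg0 : ∀ w, 0 ≤ g w) (hg1 : ∀ w, g w ≤ 1)
    (hfg : Integrable (fun w => f (g w)) μ) :
    f (∫ w, g w ∂μ) ≤ ∫ w, f (g w) ∂μ := by
  have hgi : Integrable g μ := integrable01 hgm hg0 hg1
  set m := ∫ w, g w ∂μ with hm
  have hm0 : 0 ≤ m := integral_nonneg hg0
  have hm1 : m ≤ 1 := by
    calc m ≤ ∫ _w, (1:ℝ) ∂μ := integral_mono hgi (integrable_const 1) hg1
      _ = 1 := by simp
  rcases eq_or_lt_of_le hm0 with h0 | h0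
  · have hgz : g =ᵐ[μ] 0 := (integral_eq_zero_iff_of_nonneg hg0 hgi).mp h0.symm
    have heq : (fun w => f (g w)) =ᵐ[μ] fun _ => f 0 := hgz.mono fun w hw => by simp [hw]
    rw [integral_congr_ae heq, integral_const]
    simp [← h0]
  rcases eq_or_lt_of_le hm1 with h1 | h1
  · have hgz : (fun w => 1 - g w) =ᵐ[μ] 0 := by
      refine (integral_eq_zero_iff_of_nonneg (fun w => sub_nonneg.mpr (hg1 w))
        ((integrable_const 1).sub hgi)).mp ?_
      rw [integral_sub (integrable_const 1) hgi]
      simp [← hm, h1]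
    have heq : (fun w => f (g w)) =ᵐ[μ] fun _ => f 1 := hgz.mono fun w hw => by
      have hw' : 1 - g w = 0 := by simpa using hw
      have : g w = 1 := by linarith
      simp [this]
    rw [integral_congr_ae heq, integral_const]
    simp [h1]
  · -- supporting line at m ∈ (0,1)
    set T := (fun y => (f y - f m) / (y - m)) '' Set.Ioc m 1 with hT
    have hTne : T.Nonempty := ⟨_, 1, ⟨h1, le_refl 1⟩, rfl⟩
    have hTbd : BddBelow T := by
      refine ⟨(f m - f 0) / (m - 0), ?_⟩
      rintro _ ⟨y, hy, rfl⟩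
      exact hconv.slope_mono_adjacent ⟨le_refl 0, zero_le_one⟩
        ⟨hm0.trans hy.1.le, hy.2⟩ h0 hy.1
    set s := sInf T with hs
    have hline : ∀ y ∈ Set.Icc (0:ℝ) 1, f m + s * (y - m) ≤ f y := by
      intro y hy
      rcases lt_trichotomy y m with hlt | heq | hgt
      · have hslope : (f m - f y) / (m - y) ≤ s := by
          refine le_csInf hTne ?_
          rintro _ ⟨z, hz, rfl⟩
          exact hconv.slope_mono_adjacent hy ⟨hm0.trans hz.1.le, hz.2⟩ hlt hz.1
        have hmy : 0 < m - y := by linarith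
        have h2 := (div_le_iff₀ hmy).mp hslope
        have h3 : s * (y - m) = -(s * (m - y)) := by ring
        linarith
      · simp [heq]
      · have hslope : s ≤ (f y - f m) / (y - m) := csInf_le hTbd ⟨y, ⟨hgt, hy.2⟩, rfl⟩
        have hym : 0 < y - m := by linarith
        have h2 := (le_div_iff₀ hym).mp hslope
        linarith
    have hI : Integrable (fun w => s * (g w - m)) μ := by
      exact (hgi.sub (integrable_const m)).const_mul s
    have hlin : ∫ w, (f m + s * (g w - m)) ∂μ = f m := by
      rw [integral_add (integrable_const _) hI, integral_const_mul,
        integral_sub hgi (integrable_const m), integral_const]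
      simp [← hm]
    calc f m = ∫ w, (f m + s * (g w - m)) ∂μ := hlin.symm
      _ ≤ ∫ w, f (g w) ∂μ := by
          refine integral_mono ((integrable_const _).add hI) hfg ?_
          exact fun w => hline (g w) ⟨hg0 w, hg1 w⟩


end TOff

/-- If an algorithm `A` is `f`-DP, with `f = T(P₀,P₁)` a trade-off function, then for every
probability measure `𝔻` on `X`, `A` is `f_{n,𝔻}`-WMIP. -/
theorem fdp_implies_wmip {X Y Z : Type*}
    [MeasurableSpace X] [MeasurableSpace Y] [MeasurableSpace Z]
    {n : ℕ} (hn : 0 < n)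
    (P₀ P₁ : Measure Z) [IsProbabilityMeasure P₀] [IsProbabilityMeasure P₁]
    (A : Kernel (Fin n → X) Y) [IsMarkovKernel A]
    (h : fDP A (tradeoff P₀ P₁)) :
    ∀ 𝔻 : Measure X, IsProbabilityMeasure 𝔻 → WMIP hn A (tradeoff P₀ P₁) 𝔻 := by
  intro 𝔻 h𝔻 x α hα
  haveI := h𝔻
  set μ : Measure (Fin n → X) := Measure.pi fun _ : Fin n => 𝔻 with hμ
  haveI : IsProbabilityMeasure μ := by rw [hμ]; infer_instance
  haveI : IsProbabilityMeasure (Pout A 𝔻) := by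
    constructor
    rw [Pout, Measure.bind_apply MeasurableSet.univ A.measurable.aemeasurable]
    simp
  have hu : Measurable (fun D : Fin n → X => Function.update D ⟨0, hn⟩ x) :=
    measurable_update_left
  rw [TOff.tradeoff_eq]
  refine le_csInf ⟨∫ _ω, (1 - α) ∂(Pin hn x A 𝔻), fun _ => α, measurable_const,
    fun _ => hα.1, fun _ => hα.2, by simp, rfl⟩ ?_
  rintro r ⟨φ, hφm, hφ0, hφ1, hφint, hr⟩
  -- lintegral representations
  set Φ : Y → ℝ≥0∞ := fun ω => ENNReal.ofReal (φ ω) with hΦ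
  set Ψ : Y → ℝ≥0∞ := fun ω => ENNReal.ofReal (1 - φ ω) with hΨ
  have hΦm : Measurable Φ := ENNReal.measurable_ofReal.comp hφm
  have hΨm : Measurable Ψ := ENNReal.measurable_ofReal.comp (measurable_const.sub hφm)
  have hconv1 : ∀ Q : Measure Y, ∫ ω, φ ω ∂Q = (∫⁻ ω, Φ ω ∂Q).toReal := fun Q =>
    integral_eq_lintegral_of_nonneg_ae (Filter.Eventually.of_forall hφ0)
      hφm.aestronglyMeasurable
  have hconv2 : ∀ Q : Measure Y, ∫ ω, (1 - φ ω) ∂Q = (∫⁻ ω, Ψ ω ∂Q).toReal := fun Q =>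
    integral_eq_lintegral_of_nonneg_ae
      (Filter.Eventually.of_forall fun ω => sub_nonneg.mpr (hφ1 ω))
      (measurable_const.sub hφm).aestronglyMeasurable
  set G : (Fin n → X) → ℝ≥0∞ := fun D => ∫⁻ ω, Φ ω ∂(A D) with hG
  set H : (Fin n → X) → ℝ≥0∞ := fun D => ∫⁻ ω, Ψ ω ∂(A (Function.update D ⟨0, hn⟩ x)) with hH
  have hGm : Measurable G := (Measure.measurable_lintegral hΦm).comp A.measurable
  have hHm : Measurable H := (Measure.measurable_lintegral hΨm).comp (A.measurable.comp hu)
  have hGle : ∀ D, G D ≤ 1 := fun D => by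
    calc G D ≤ ∫⁻ _ω, 1 ∂(A D) :=
          lintegral_mono fun ω => ENNReal.ofReal_le_one.mpr (hφ1 ω)
      _ = 1 := by simp
  have hHle : ∀ D, H D ≤ 1 := fun D => by
    calc H D ≤ ∫⁻ _ω, 1 ∂(A (Function.update D ⟨0, hn⟩ x)) :=
          lintegral_mono fun ω => ENNReal.ofReal_le_one.mpr (by linarith [hφ0 ω])
      _ = 1 := by simp
  set g : (Fin n → X) → ℝ := fun D => (G D).toReal with hg
  set p : (Fin n → X) → ℝ := fun D => (H D).toReal with hp
  have hgm : Measurable g := hGm.ennreal_toReal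
  have hpm : Measurable p := hHm.ennreal_toReal
  have hg0 : ∀ D, 0 ≤ g D := fun D => ENNReal.toReal_nonneg
  have hp0 : ∀ D, 0 ≤ p D := fun D => ENNReal.toReal_nonneg
  have hg1 : ∀ D, g D ≤ 1 := fun D => by
    simpa using ENNReal.toReal_mono (by simp) (hGle D)
  have hp1 : ∀ D, p D ≤ 1 := fun D => by
    simpa using ENNReal.toReal_mono (by simp) (hHle D)
  have hgeq : ∀ D, g D = ∫ ω, φ ω ∂(A D) := fun D => (hconv1 (A D)).symm
  have hpeq : ∀ D, p D = ∫ ω, (1 - φ ω) ∂(A (Function.update D ⟨0, hn⟩ x)) := fun D =>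
    (hconv2 _).symm
  have hgi : Integrable g μ := TOff.integrable01 hgm hg0 hg1
  have hpi : Integrable p μ := TOff.integrable01 hpm hp0 hp1
  -- identify the two mixture integrals
  have hout : ∫ ω, φ ω ∂(Pout A 𝔻) = ∫ D, g D ∂μ := by
    rw [hconv1, Pout, Measure.lintegral_bind A.measurable.aemeasurable hΦm.aemeasurable,
      integral_toReal (hGm.aemeasurable) (Filter.Eventually.of_forall fun D =>
        lt_of_le_of_lt (hGle D) ENNReal.one_lt_top)]
  have hin : ∫ ω, (1 - φ ω) ∂(Pin hn x A 𝔻) = ∫ D, p D ∂μ := by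
    rw [hconv2, Pin, Measure.lintegral_bind (show Measurable fun D : Fin n → X => A (Function.update D ⟨0, hn⟩ x) from A.measurable.comp hu).aemeasurable hΨm.aemeasurable,
      integral_toReal (hHm.aemeasurable) (Filter.Eventually.of_forall fun D =>
        lt_of_le_of_lt (hHle D) ENNReal.one_lt_top)]
  -- per-dataset fDP inequality
  have hper : ∀ D, tradeoff P₀ P₁ (g D) ≤ p D := by
    intro D
    have hadj : Adjacent D (Function.update D ⟨0, hn⟩ x) :=
      ⟨⟨0, hn⟩, fun j hj => (Function.update_of_ne hj x D).symm⟩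
    have h1 := h D _ hadj (g D) ⟨hg0 D, hg1 D⟩
    have h2 : tradeoff (A D) (A (Function.update D ⟨0, hn⟩ x)) (g D) ≤
        ∫ ω, (1 - φ ω) ∂(A (Function.update D ⟨0, hn⟩ x)) :=
      TOff.tradeoff_le _ _ hφm hφ0 hφ1 (le_of_eq (hgeq D).symm)
    rw [hpeq]
    exact h1.trans h2
  -- measurability and integrability of the composed function
  have hq_anti : Antitone (fun t : ℝ => tradeoff P₀ P₁ (min 1 (max 0 t))) := by
    intro a b hab
    exact TOff.tradeoff_antitone P₀ P₁ (le_min zero_le_one (le_max_left 0 a))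
      (min_le_min (le_refl 1) (max_le_max (le_refl 0) hab))
  have hfg_eq : (fun D => tradeoff P₀ P₁ (g D)) =
      (fun t : ℝ => tradeoff P₀ P₁ (min 1 (max 0 t))) ∘ g := by
    funext D
    simp [Function.comp, max_eq_right (hg0 D), min_eq_right (hg1 D)]
  have hfgm : Measurable (fun D => tradeoff P₀ P₁ (g D)) := by
    rw [hfg_eq]; exact hq_anti.measurable.comp hgm
  have hfgi : Integrable (fun D => tradeoff P₀ P₁ (g D)) μ := by
    refine (integrable_const (tradeoff P₀ P₁ 0)).mono' hfgm.aestronglyMeasurable ?_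
    refine Filter.Eventually.of_forall fun D => abs_le.mpr
      ⟨?_, TOff.tradeoff_antitone P₀ P₁ (le_refl 0) (hg0 D)⟩
    have := TOff.tradeoff_nonneg P₀ P₁ (g D)
    have := TOff.tradeoff_nonneg P₀ P₁ (0 : ℝ)
    linarith
  -- Jensen and conclusion
  have hm0 : 0 ≤ ∫ D, g D ∂μ := integral_nonneg hg0
  have hmα : ∫ D, g D ∂μ ≤ α := hout ▸ hφint
  calc tradeoff P₀ P₁ α ≤ tradeoff P₀ P₁ (∫ D, g D ∂μ) :=
        TOff.tradeoff_antitone P₀ P₁ hm0 hmα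
    _ ≤ ∫ D, tradeoff P₀ P₁ (g D) ∂μ :=
        TOff.jensen μ (TOff.tradeoff_convexOn P₀ P₁) hgm hg0 hg1 hfgi
    _ ≤ ∫ D, p D ∂μ := integral_mono hfgi hpi hper
    _ = r := by rw [← hin, hr]
end

section
/- Let X be a measurable space, n ∈ ℕ, 𝔻 a probability measure on X, and f : [0,1] → [0,1]. If an algorithm A with output space Y is f_{n,𝔻}-WMIP and K is any Markov kernel from Y to a measurable space Z (independent of the dataset), then the post-processed algorithm D ↦ ∫ K(y) d(A(D))(y), i.e., the kernel composition K ∘ A, is also f_{n,𝔻}-WMIP. -/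
open MeasureTheory ProbabilityTheory
open scoped ProbabilityTheory NNReal ENNReal

lemma test_integral_bind {Y Z : Type*} [MeasurableSpace Y] [MeasurableSpace Z]
    (μ : Measure Y) (K : Kernel Y Z) [IsMarkovKernel K]
    (φ : Z → ℝ) (hm : Measurable φ) (h0 : ∀ z, 0 ≤ φ z) (h1 : ∀ z, φ z ≤ 1) :
    ∫ z, φ z ∂(μ.bind K) = ∫ y, ∫ z, φ z ∂(K y) ∂μ := by
  have hg : Measurable fun y => ∫⁻ z, ENNReal.ofReal (φ z) ∂(K y) :=
    hm.ennreal_ofReal.lintegral_kernel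
  have hgle : ∀ y, (∫⁻ z, ENNReal.ofReal (φ z) ∂(K y)) ≤ 1 := by
    intro y
    calc ∫⁻ z, ENNReal.ofReal (φ z) ∂(K y) ≤ ∫⁻ _, 1 ∂(K y) :=
          lintegral_mono fun z => by simpa using ENNReal.ofReal_le_one.2 (h1 z)
      _ = 1 := by simp
  have key : ∀ ν : Measure Z, ∫ z, φ z ∂ν = (∫⁻ z, ENNReal.ofReal (φ z) ∂ν).toReal := by
    intro ν
    rw [integral_eq_lintegral_of_nonneg_ae (Filter.Eventually.of_forall h0)
      hm.aestronglyMeasurable]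
  rw [key, Measure.lintegral_bind (K.measurable.aemeasurable) hm.ennreal_ofReal.aemeasurable]
  have : ∀ y, ∫ z, φ z ∂(K y) = (∫⁻ z, ENNReal.ofReal (φ z) ∂(K y)).toReal := fun y => key _
  simp_rw [this]
  rw [integral_toReal hg.aemeasurable]
  exact Filter.Eventually.of_forall fun y => lt_of_le_of_lt (hgle y) (by norm_num)

lemma tradeoff_bind_le {Y Z : Type*} [MeasurableSpace Y] [MeasurableSpace Z]
    (P Q : Measure Y) (K : Kernel Y Z) [IsMarkovKernel K] {α : ℝ} (hα : 0 ≤ α) :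
    tradeoff P Q α ≤ tradeoff (P.bind K) (Q.bind K) α := by
  apply csInf_le_csInf
  · refine ⟨0, ?_⟩
    rintro r ⟨φ, hm, h0, h1, -, rfl⟩
    exact integral_nonneg fun ω => by simp only [Pi.zero_apply]; linarith [h1 ω]
  · exact ⟨∫ z, (1 - (0:ℝ)) ∂(Q.bind K), fun _ => 0, measurable_const,
      fun _ => le_refl 0, fun _ => zero_le_one, by simpa, rfl⟩
  · rintro r ⟨φ, hm, h0, h1, hint, rfl⟩
    have hintg : ∀ y, Integrable φ (K y) := fun y =>
      (integrable_const 1).mono' hm.aestronglyMeasurable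
        (Filter.Eventually.of_forall fun z => by
          rw [Real.norm_eq_abs, abs_of_nonneg (h0 z)]; exact h1 z)
    refine ⟨fun y => ∫ z, φ z ∂(K y), ?_, ?_, ?_, ?_, ?_⟩
    · exact (StronglyMeasurable.integral_kernel_prod_right' (κ := K)
        (hm.stronglyMeasurable.comp_measurable measurable_snd)).measurable
    · exact fun y => integral_nonneg h0
    · intro y
      calc ∫ z, φ z ∂(K y) ≤ ∫ _, (1:ℝ) ∂(K y) := integral_mono (hintg y) (integrable_const 1) h1
        _ = 1 := by simp
    · rwa [← test_integral_bind P K φ hm h0 h1]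
    · have h1' : ∀ z, (fun z => 1 - φ z) z ≤ 1 := fun z => by simp only; linarith [h0 z]
      have h0' : ∀ z, 0 ≤ (fun z => 1 - φ z) z := fun z => by simp only; linarith [h1 z]
      rw [test_integral_bind Q K (fun z => 1 - φ z) (measurable_const.sub hm) h0' h1']
      refine integral_congr_ae (Filter.Eventually.of_forall fun y => ?_)
      simp only
      rw [integral_sub (integrable_const 1) (hintg y)]
      simp

/-- Post-processing: if `A` is `f_{n,𝔻}`-WMIP and `K` is any Markov kernel from the output
space `Y` to `Z`, then the post-processed algorithm `K ∘ A` is also `f_{n,𝔻}`-WMIP. -/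
theorem wmip_postprocessing {X Y Z : Type*}
    [MeasurableSpace X] [MeasurableSpace Y] [MeasurableSpace Z]
    {n : ℕ} (hn : 0 < n) (𝔻 : Measure X) [IsProbabilityMeasure 𝔻]
    (f : ℝ → ℝ)
    (A : Kernel (Fin n → X) Y) [IsMarkovKernel A]
    (K : Kernel Y Z) [IsMarkovKernel K]
    (h : WMIP hn A f 𝔻) :
    WMIP hn (K ∘ₖ A) f 𝔻 := by
  intro x α hα
  have hPout : Pout (K ∘ₖ A) 𝔻 = (Pout A 𝔻).bind K := by
    unfold Pout
    simp_rw [Kernel.comp_apply]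
    rw [Measure.bind_bind A.measurable.aemeasurable K.measurable.aemeasurable]
  have hPin : Pin hn x (K ∘ₖ A) 𝔻 = (Pin hn x A 𝔻).bind K := by
    unfold Pin
    simp_rw [Kernel.comp_apply]
    have hf : Measurable fun D : Fin n → X => A (Function.update D ⟨0, hn⟩ x) :=
      A.measurable.comp measurable_update_left
    rw [Measure.bind_bind hf.aemeasurable K.measurable.aemeasurable]
  rw [hPout, hPin]
  exact (h x α hα).trans (tradeoff_bind_le _ _ K hα.1)
end

section
/- Let X be a compact metric space equipped with its Borel σ-algebra, n ∈ ℕ, 𝔻 a probability measure on X, and A a Markov kernel from X^n to a measurable space Y such that the map D ↦ A(D) is continuous from X^n to probability measures on Y in total variation distance. Then for every α ∈ [0,1] there exists x* ∈ X such that for all x ∈ X, T(P_out(x, A, 𝔻, n), P_in(x, A, 𝔻, n))(α) ≥ T(P_out(x*, A, 𝔻, n), P_in(x*, A, 𝔻, n))(α); that is, the worst-case example for membership inference at level α exists. -/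
open MeasureTheory ProbabilityTheory
open scoped ProbabilityTheory NNReal ENNReal

/-- Total variation distance between two measures: `sup_S |μ(S) − ν(S)|` over measurable `S`. -/
noncomputable def tvDist {Y : Type*} [MeasurableSpace Y] (μ ν : Measure Y) : ℝ :=
  sSup { r : ℝ | ∃ S : Set Y, MeasurableSet S ∧ r = |(μ S).toReal - (ν S).toReal| }

section AuxWorstCase
open Set
variable {Y : Type*} [MeasurableSpace Y]

variable {Y : Type*} [MeasurableSpace Y]

lemma tvSet_nonempty (μ ν : Measure Y) :
    { r : ℝ | ∃ S : Set Y, MeasurableSet S ∧ r = |(μ S).toReal - (ν S).toReal| }.Nonempty :=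
  ⟨0, ∅, MeasurableSet.empty, by simp⟩

lemma toReal_prob_le_one (μ : Measure Y) [IsProbabilityMeasure μ] (S : Set Y) :
    (μ S).toReal ≤ 1 := by
  simpa using ENNReal.toReal_mono ENNReal.one_ne_top (prob_le_one (μ := μ) (s := S))

lemma tvSet_bddAbove (μ ν : Measure Y) [IsProbabilityMeasure μ] [IsProbabilityMeasure ν] :
    BddAbove { r : ℝ | ∃ S : Set Y, MeasurableSet S ∧ r = |(μ S).toReal - (ν S).toReal| } := by
  refine ⟨1, ?_⟩
  rintro r ⟨S, hS, rfl⟩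
  have h1 := toReal_prob_le_one μ S
  have h2 := toReal_prob_le_one ν S
  have h3 : (0:ℝ) ≤ (μ S).toReal := ENNReal.toReal_nonneg
  have h4 : (0:ℝ) ≤ (ν S).toReal := ENNReal.toReal_nonneg
  rw [abs_sub_le_iff]; constructor <;> linarith

lemma le_tvDist (μ ν : Measure Y) [IsProbabilityMeasure μ] [IsProbabilityMeasure ν]
    {S : Set Y} (hS : MeasurableSet S) :
    |(μ S).toReal - (ν S).toReal| ≤ tvDist μ ν :=
  le_csSup (tvSet_bddAbove μ ν) ⟨S, hS, rfl⟩

lemma tvDist_nonneg (μ ν : Measure Y) [IsProbabilityMeasure μ] [IsProbabilityMeasure ν] :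
    0 ≤ tvDist μ ν := by
  have := le_tvDist μ ν MeasurableSet.empty
  simpa using this.trans_eq' (by simp)

lemma tvDist_le (μ ν : Measure Y) {ε : ℝ}
    (h : ∀ S : Set Y, MeasurableSet S → |(μ S).toReal - (ν S).toReal| ≤ ε) :
    tvDist μ ν ≤ ε :=
  csSup_le (tvSet_nonempty μ ν) (by rintro r ⟨S, hS, rfl⟩; exact h S hS)

lemma tvDist_comm (μ ν : Measure Y) : tvDist μ ν = tvDist ν μ := by
  unfold tvDist
  congr 1
  ext r
  constructor <;> rintro ⟨S, hS, rfl⟩ <;> exact ⟨S, hS, (abs_sub_comm _ _)⟩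

lemma tvDist_self (μ : Measure Y) : tvDist μ μ = 0 := by
  refine le_antisymm (csSup_le (tvSet_nonempty μ μ) ?_) ?_
  · rintro r ⟨S, hS, rfl⟩; simp
  · exact le_csSup ⟨0, by rintro r ⟨S, hS, rfl⟩; simp⟩ ⟨∅, MeasurableSet.empty, by simp⟩

lemma tvDist_triangle (μ ν ρ : Measure Y) [IsProbabilityMeasure μ]
    [IsProbabilityMeasure ν] [IsProbabilityMeasure ρ] :
    tvDist μ ρ ≤ tvDist μ ν + tvDist ν ρ := by
  refine csSup_le (tvSet_nonempty μ ρ) ?_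
  rintro r ⟨S, hS, rfl⟩
  calc |(μ S).toReal - (ρ S).toReal|
      ≤ |(μ S).toReal - (ν S).toReal| + |(ν S).toReal - (ρ S).toReal| := abs_sub_le _ _ _
    _ ≤ tvDist μ ν + tvDist ν ρ := add_le_add (le_tvDist μ ν hS) (le_tvDist ν ρ hS)

lemma measure_le_add_of_tv (μ ν : Measure Y) [IsProbabilityMeasure μ] [IsProbabilityMeasure ν]
    {S : Set Y} (hS : MeasurableSet S) {ε : ℝ} (h : tvDist μ ν ≤ ε) :
    μ S ≤ ν S + ENNReal.ofReal ε := by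
  have h1 : |(μ S).toReal - (ν S).toReal| ≤ ε := (le_tvDist μ ν hS).trans h
  have h2 : (μ S).toReal ≤ (ν S).toReal + ε := by
    have := (abs_sub_le_iff.mp h1).1; linarith
  calc μ S = ENNReal.ofReal (μ S).toReal := (ENNReal.ofReal_toReal (measure_ne_top μ S)).symm
    _ ≤ ENNReal.ofReal ((ν S).toReal + ε) := ENNReal.ofReal_le_ofReal h2
    _ = ENNReal.ofReal (ν S).toReal + ENNReal.ofReal ε := ENNReal.ofReal_add ENNReal.toReal_nonneg (by
        by_contra hc
        push_neg at hc
        have : |(μ S).toReal - (ν S).toReal| ≤ ε := h1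
        have h0 : (0:ℝ) ≤ |(μ S).toReal - (ν S).toReal| := abs_nonneg _
        linarith)
    _ = ν S + ENNReal.ofReal ε := by rw [ENNReal.ofReal_toReal (measure_ne_top ν S)]

lemma integral_le_add_tv (μ ν : Measure Y) [IsProbabilityMeasure μ] [IsProbabilityMeasure ν]
    {φ : Y → ℝ} (hφ : Measurable φ) (h0 : ∀ y, 0 ≤ φ y) (h1 : ∀ y, φ y ≤ 1) :
    ∫ y, φ y ∂ν ≤ (∫ y, φ y ∂μ) + tvDist μ ν := by
  set tv := tvDist μ ν with htv
  have tvnn : 0 ≤ tv := tvDist_nonneg μ ν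
  have laynu : ∫⁻ y, ENNReal.ofReal (φ y) ∂ν = ∫⁻ t in Ioi (0:ℝ), ν {a | t < φ a} :=
    lintegral_eq_lintegral_meas_lt ν (ae_of_all _ h0) hφ.aemeasurable
  have laymu : ∫⁻ y, ENNReal.ofReal (φ y) ∂μ = ∫⁻ t in Ioi (0:ℝ), μ {a | t < φ a} :=
    lintegral_eq_lintegral_meas_lt μ (ae_of_all _ h0) hφ.aemeasurable
  have hμanti : Antitone fun t : ℝ => μ {a | t < φ a} := fun s t hst =>
    measure_mono (fun a ha => lt_of_le_of_lt hst ha)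
  have hmble : Measurable fun t : ℝ => μ {a | t < φ a} + (Ioc (0:ℝ) 1).indicator
      (fun _ => ENNReal.ofReal tv) t :=
    hμanti.measurable.add (measurable_const.indicator measurableSet_Ioc)
  have key : ∫⁻ t in Ioi (0:ℝ), ν {a | t < φ a} ≤
      ∫⁻ t in Ioi (0:ℝ), (μ {a | t < φ a} + (Ioc (0:ℝ) 1).indicator
        (fun _ => ENNReal.ofReal tv) t) := by
    refine setLIntegral_mono hmble (fun t ht => ?_)
    by_cases htle : t ≤ 1
    · have hind : (Ioc (0:ℝ) 1).indicator (fun _ => ENNReal.ofReal tv) t = ENNReal.ofReal tv :=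
        indicator_of_mem (s := Ioc (0:ℝ) 1) ⟨ht, htle⟩ _
      rw [hind]
      have hSm : MeasurableSet {a | t < φ a} := measurableSet_lt measurable_const hφ
      exact measure_le_add_of_tv ν μ hSm (le_of_eq (tvDist_comm ν μ))
    · have hempty : {a | t < φ a} = ∅ := by
        ext a; simp only [mem_setOf_eq, mem_empty_iff_false, iff_false, not_lt]
        exact (h1 a).trans (le_of_not_ge htle)
      rw [hempty, measure_empty]
      exact zero_le
  have keyr : ∫⁻ t in Ioi (0:ℝ), (μ {a | t < φ a} + (Ioc (0:ℝ) 1).indicator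
      (fun _ => ENNReal.ofReal tv) t) =
      (∫⁻ t in Ioi (0:ℝ), μ {a | t < φ a}) + ENNReal.ofReal tv := by
    rw [lintegral_add_right _ (measurable_const.indicator measurableSet_Ioc)]
    congr 1
    rw [lintegral_indicator measurableSet_Ioc, Measure.restrict_restrict measurableSet_Ioc,
      setLIntegral_const]
    have : Ioc (0:ℝ) 1 ∩ Ioi 0 = Ioc 0 1 := inter_eq_left.mpr Ioc_subset_Ioi_self
    rw [this, Real.volume_Ioc]
    simp
  have hfin : (∫⁻ y, ENNReal.ofReal (φ y) ∂μ) ≤ 1 := by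
    calc ∫⁻ y, ENNReal.ofReal (φ y) ∂μ ≤ ∫⁻ _, 1 ∂μ :=
        lintegral_mono fun y => ENNReal.ofReal_le_one.mpr (h1 y)
      _ = 1 := by simp
  have hfinν : (∫⁻ y, ENNReal.ofReal (φ y) ∂ν) ≤ 1 := by
    calc ∫⁻ y, ENNReal.ofReal (φ y) ∂ν ≤ ∫⁻ _, 1 ∂ν :=
        lintegral_mono fun y => ENNReal.ofReal_le_one.mpr (h1 y)
      _ = 1 := by simp
  have hle : (∫⁻ y, ENNReal.ofReal (φ y) ∂ν) ≤ (∫⁻ y, ENNReal.ofReal (φ y) ∂μ)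
      + ENNReal.ofReal tv := by
    rw [laynu, laymu]; exact key.trans (le_of_eq keyr)
  have hμne : (∫⁻ y, ENNReal.ofReal (φ y) ∂μ) ≠ ⊤ := (hfin.trans_lt ENNReal.one_lt_top).ne
  have hint : ∫ y, φ y ∂ν = (∫⁻ y, ENNReal.ofReal (φ y) ∂ν).toReal :=
    integral_eq_lintegral_of_nonneg_ae (ae_of_all _ h0) hφ.aestronglyMeasurable
  have hintμ : ∫ y, φ y ∂μ = (∫⁻ y, ENNReal.ofReal (φ y) ∂μ).toReal :=
    integral_eq_lintegral_of_nonneg_ae (ae_of_all _ h0) hφ.aestronglyMeasurable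
  rw [hint, hintμ]
  calc (∫⁻ y, ENNReal.ofReal (φ y) ∂ν).toReal
      ≤ ((∫⁻ y, ENNReal.ofReal (φ y) ∂μ) + ENNReal.ofReal tv).toReal :=
        ENNReal.toReal_mono (by finiteness) hle
    _ = (∫⁻ y, ENNReal.ofReal (φ y) ∂μ).toReal + tv := by
        rw [ENNReal.toReal_add hμne ENNReal.ofReal_ne_top, ENNReal.toReal_ofReal tvnn]

/-- Lipschitz property of the tradeoff in its second argument. -/
lemma tradeoff_le_add (P μ ν : Measure Y) [IsProbabilityMeasure P]
    [IsProbabilityMeasure μ] [IsProbabilityMeasure ν] {α : ℝ} (hα : 0 ≤ α) :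
    tradeoff P ν α ≤ tradeoff P μ α + tvDist μ ν := by
  set Sμ := { r : ℝ | ∃ φ : Y → ℝ, Measurable φ ∧ (∀ ω, 0 ≤ φ ω) ∧ (∀ ω, φ ω ≤ 1) ∧
    (∫ ω, φ ω ∂P) ≤ α ∧ r = ∫ ω, (1 - φ ω) ∂μ } with hSμ
  have hne : Sμ.Nonempty := by
    refine ⟨∫ ω, (1 - (0:ℝ)) ∂μ, fun _ => 0, measurable_const, fun _ => le_refl 0,
      fun _ => zero_le_one, by simpa using hα, rfl⟩
  have hkey : ∀ r ∈ Sμ, tradeoff P ν α ≤ r + tvDist μ ν := by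
    rintro r ⟨φ, hm, h0, h1, hint, rfl⟩
    have hmem : (∫ ω, (1 - φ ω) ∂ν) ∈ { r : ℝ | ∃ φ : Y → ℝ, Measurable φ ∧ (∀ ω, 0 ≤ φ ω) ∧
        (∀ ω, φ ω ≤ 1) ∧ (∫ ω, φ ω ∂P) ≤ α ∧ r = ∫ ω, (1 - φ ω) ∂ν } :=
      ⟨φ, hm, h0, h1, hint, rfl⟩
    have hbdd : BddBelow { r : ℝ | ∃ φ : Y → ℝ, Measurable φ ∧ (∀ ω, 0 ≤ φ ω) ∧
        (∀ ω, φ ω ≤ 1) ∧ (∫ ω, φ ω ∂P) ≤ α ∧ r = ∫ ω, (1 - φ ω) ∂ν } := by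
      refine ⟨0, ?_⟩
      rintro r ⟨ψ, hmψ, h0ψ, h1ψ, _, rfl⟩
      exact integral_nonneg fun ω => by simpa using sub_nonneg.mpr (h1ψ ω)
    have hle : tradeoff P ν α ≤ ∫ ω, (1 - φ ω) ∂ν := csInf_le hbdd hmem
    have hlip : ∫ ω, (1 - φ ω) ∂ν ≤ (∫ ω, (1 - φ ω) ∂μ) + tvDist μ ν :=
      integral_le_add_tv μ ν (measurable_const.sub hm)
        (fun ω => by linarith [h1 ω]) (fun ω => by linarith [h0 ω])
    linarith
  have : tradeoff P ν α - tvDist μ ν ≤ tradeoff P μ α :=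
    le_csInf hne fun r hr => by linarith [hkey r hr]
  linarith

variable {α' : Type*} [MeasurableSpace α']

lemma isProb_bind (π : Measure α') [IsProbabilityMeasure π] (m : α' → Measure Y)
    (hm : Measurable m) (h : ∀ a, IsProbabilityMeasure (m a)) :
    IsProbabilityMeasure (π.bind m) := by
  constructor
  rw [Measure.bind_apply MeasurableSet.univ hm.aemeasurable]
  rw [lintegral_congr (fun a => (h a).measure_univ)]
  simp

lemma abs_toReal_sub_le {a b : ℝ≥0∞} (ha : a ≠ ⊤) (hb : b ≠ ⊤) {ε : ℝ} (hε : 0 ≤ ε)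
    (h1 : a ≤ b + ENNReal.ofReal ε) (h2 : b ≤ a + ENNReal.ofReal ε) :
    |a.toReal - b.toReal| ≤ ε := by
  rw [abs_sub_le_iff]
  constructor
  · have := ENNReal.toReal_mono (by finiteness) h1
    rw [ENNReal.toReal_add hb ENNReal.ofReal_ne_top, ENNReal.toReal_ofReal hε] at this
    linarith
  · have := ENNReal.toReal_mono (by finiteness) h2
    rw [ENNReal.toReal_add ha ENNReal.ofReal_ne_top, ENNReal.toReal_ofReal hε] at this
    linarith

lemma tvDist_bind_le (π : Measure α') [IsProbabilityMeasure π] (m₁ m₂ : α' → Measure Y)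
    (hm₁ : Measurable m₁) (hm₂ : Measurable m₂)
    (h₁ : ∀ a, IsProbabilityMeasure (m₁ a)) (h₂ : ∀ a, IsProbabilityMeasure (m₂ a))
    {ε : ℝ} (hε : 0 ≤ ε) (h : ∀ a, tvDist (m₁ a) (m₂ a) ≤ ε) :
    tvDist (π.bind m₁) (π.bind m₂) ≤ ε := by
  haveI := isProb_bind π m₁ hm₁ h₁
  haveI := isProb_bind π m₂ hm₂ h₂
  refine tvDist_le _ _ fun S hS => ?_
  have key : ∀ (p q : α' → Measure Y), Measurable p → Measurable q →
      (∀ a, IsProbabilityMeasure (p a)) → (∀ a, IsProbabilityMeasure (q a)) →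
      (∀ a, tvDist (p a) (q a) ≤ ε) → π.bind p S ≤ π.bind q S + ENNReal.ofReal ε := by
    intro p q hp hq hpp hqp hpq
    rw [Measure.bind_apply hS hp.aemeasurable, Measure.bind_apply hS hq.aemeasurable]
    calc ∫⁻ a, p a S ∂π ≤ ∫⁻ a, (q a S + ENNReal.ofReal ε) ∂π := by
          refine lintegral_mono fun a => ?_
          haveI := hpp a; haveI := hqp a
          exact measure_le_add_of_tv (p a) (q a) hS (hpq a)
      _ = (∫⁻ a, q a S ∂π) + ENNReal.ofReal ε := by
          rw [lintegral_add_right _ measurable_const, lintegral_const, measure_univ, mul_one]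
  have h12 := key m₁ m₂ hm₁ hm₂ h₁ h₂ h
  have h21 := key m₂ m₁ hm₂ hm₁ h₂ h₁ (fun a => (tvDist_comm (m₂ a) (m₁ a)).trans_le (h a))
  exact abs_toReal_sub_le (measure_ne_top _ _) (measure_ne_top _ _) hε h12 h21

structure ProbM (Y : Type*) [MeasurableSpace Y] where
  m : Measure Y
  prob : IsProbabilityMeasure m

noncomputable instance : PseudoMetricSpace (ProbM Y) where
  dist μ ν := tvDist μ.m ν.m
  dist_self μ := tvDist_self μ.m
  dist_comm μ ν := tvDist_comm μ.m ν.m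
  dist_triangle μ ν ρ := by
    haveI := μ.prob; haveI := ν.prob; haveI := ρ.prob
    exact tvDist_triangle μ.m ν.m ρ.m

lemma probM_dist (μ ν : ProbM Y) : dist μ ν = tvDist μ.m ν.m := rfl

end AuxWorstCase

/-- Existence of the worst-case example: if `X` is a compact metric space with its Borel
σ-algebra and `D ↦ A(D)` is continuous in total variation distance, then for every
`α ∈ [0,1]` there is a worst-case record `x*` minimising the membership-inference
trade-off `T(Pout, Pin x)(α)` over `x ∈ X`. -/
theorem worst_case_example_exists {X Y : Type*}
    [MetricSpace X] [CompactSpace X] [MeasurableSpace X] [BorelSpace X]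
    [MeasurableSpace Y]
    {n : ℕ} (hn : 0 < n) (𝔻 : Measure X) [IsProbabilityMeasure 𝔻]
    (A : Kernel (Fin n → X) Y) [IsMarkovKernel A]
    (hcont : ∀ D : Fin n → X, ∀ ε > (0 : ℝ), ∃ δ > (0 : ℝ),
      ∀ D' : Fin n → X, dist D D' < δ → tvDist (A D) (A D') < ε) :
    ∀ α ∈ Set.Icc (0 : ℝ) 1, ∃ xstar : X, ∀ x : X,
      tradeoff (Pout A 𝔻) (Pin hn xstar A 𝔻) α ≤ tradeoff (Pout A 𝔻) (Pin hn x A 𝔻) α := by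
  intro α hα
  -- X is nonempty since it carries a probability measure
  haveI hXne : Nonempty X := by
    by_contra h
    rw [not_nonempty_iff] at h
    have h1 : 𝔻 Set.univ = 1 := measure_univ
    rw [Set.univ_eq_empty_iff.mpr h, measure_empty] at h1
    exact zero_ne_one h1
  set π : Measure (Fin n → X) := Measure.pi fun _ : Fin n => 𝔻 with hπ
  haveI : IsProbabilityMeasure π := by rw [hπ]; infer_instance
  -- measurability of the update maps
  have hupd : ∀ x : X, Measurable fun D : Fin n → X => Function.update D ⟨0, hn⟩ x := by
    intro x
    refine measurable_pi_lambda _ fun j => ?_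
    rcases eq_or_ne j ⟨0, hn⟩ with h | h
    · simpa [h, Function.update_apply] using measurable_const
    · simpa [Function.update_apply, h] using measurable_pi_apply j
  have hmx : ∀ x : X, Measurable fun D : Fin n → X => A (Function.update D ⟨0, hn⟩ x) :=
    fun x => A.measurable.comp (hupd x)
  haveI hPin : ∀ x : X, IsProbabilityMeasure (Pin hn x A 𝔻) := by
    intro x
    exact isProb_bind π _ (hmx x) (fun D => inferInstance)
  haveI hPout : IsProbabilityMeasure (Pout A 𝔻) :=
    isProb_bind π _ A.measurable (fun D => inferInstance)
  -- uniform continuity of D ↦ A D in total variation, via the TV pseudometric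
  have key_unif : ∀ ε > (0:ℝ), ∃ δ > (0:ℝ), ∀ D D' : Fin n → X,
      dist D D' < δ → tvDist (A D) (A D') < ε := by
    have hf : Continuous (fun D : Fin n → X => (⟨A D, inferInstance⟩ : ProbM Y)) := by
      rw [Metric.continuous_iff]
      intro D ε hε
      obtain ⟨δ, hδ, h⟩ := hcont D ε hε
      refine ⟨δ, hδ, fun D' hD' => ?_⟩
      have := h D' (by rwa [dist_comm] at hD')
      rw [probM_dist]
      rwa [tvDist_comm]
    have huc := CompactSpace.uniformContinuous_of_continuous hf
    rw [Metric.uniformContinuous_iff] at huc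
    intro ε hε
    obtain ⟨δ, hδ, h⟩ := huc ε hε
    exact ⟨δ, hδ, fun D D' hDD' => h hDD'⟩
  -- continuity of the tradeoff in x
  have hg : Continuous fun x : X => tradeoff (Pout A 𝔻) (Pin hn x A 𝔻) α := by
    rw [Metric.continuous_iff]
    intro x₀ ε hε
    obtain ⟨δ, hδ, hδ'⟩ := key_unif (ε/2) (by positivity)
    refine ⟨δ, hδ, fun x hx => ?_⟩
    have htv : tvDist (Pin hn x A 𝔻) (Pin hn x₀ A 𝔻) ≤ ε/2 := by
      unfold Pin
      refine tvDist_bind_le _ _ _ (hmx x) (hmx x₀) (fun D => inferInstance)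
        (fun D => inferInstance) (by positivity) (fun D => ?_)
      refine le_of_lt (hδ' _ _ ?_)
      rw [dist_pi_lt_iff hδ]
      intro i
      rcases eq_or_ne i ⟨0, hn⟩ with h | h
      · simpa [h, Function.update_apply] using hx
      · simpa [Function.update_apply, h] using hδ
    haveI := hPin x; haveI := hPin x₀
    have h1 : tradeoff (Pout A 𝔻) (Pin hn x₀ A 𝔻) α ≤
        tradeoff (Pout A 𝔻) (Pin hn x A 𝔻) α + tvDist (Pin hn x A 𝔻) (Pin hn x₀ A 𝔻) :=
      tradeoff_le_add _ _ _ hα.1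
    have h2 : tradeoff (Pout A 𝔻) (Pin hn x A 𝔻) α ≤
        tradeoff (Pout A 𝔻) (Pin hn x₀ A 𝔻) α + tvDist (Pin hn x₀ A 𝔻) (Pin hn x A 𝔻) :=
      tradeoff_le_add _ _ _ hα.1
    rw [tvDist_comm (Pin hn x₀ A 𝔻)] at h2
    rw [Real.dist_eq, abs_sub_lt_iff]
    constructor <;> linarith
  obtain ⟨xstar, -, hmin⟩ := isCompact_univ.exists_isMinOn Set.univ_nonempty hg.continuousOn
  exact ⟨xstar, fun x => hmin (Set.mem_univ x)⟩
end

section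
/- For probability measures P and Q on a measurable space Ω and any Markov kernel K from Ω to a measurable space Ω′, the trade-off function can only increase under post-processing: T(KP, KQ)(α) ≥ T(P, Q)(α) for all α ∈ [0,1], where KP denotes the mixture measure ∫ K(ω) dP(ω) on Ω′ and likewise for KQ. -/
open MeasureTheory ProbabilityTheory
open scoped ProbabilityTheory NNReal ENNReal

lemma integral_bind_test {Ω Ω' : Type*} [MeasurableSpace Ω] [MeasurableSpace Ω']
    (μ : Measure Ω) [IsProbabilityMeasure μ] (K : Kernel Ω Ω') [IsMarkovKernel K]
    (φ : Ω' → ℝ) (hm : Measurable φ) (h0 : ∀ x, 0 ≤ φ x) (h1 : ∀ x, φ x ≤ 1) :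
    ∫ x, φ x ∂(μ.bind fun ω => K ω) = ∫ ω, (∫ x, φ x ∂(K ω)) ∂μ := by
  have hKle : ∀ ω, (∫⁻ x, ENNReal.ofReal (φ x) ∂(K ω)) ≤ 1 := by
    intro ω
    calc (∫⁻ x, ENNReal.ofReal (φ x) ∂(K ω)) ≤ ∫⁻ _, 1 ∂(K ω) := by
          refine lintegral_mono fun x => ?_
          simpa using ENNReal.ofReal_le_one.mpr (h1 x)
      _ = 1 := by simp
  have hmeasF : Measurable (fun ω => ∫⁻ x, ENNReal.ofReal (φ x) ∂(K ω)) :=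
    Measurable.lintegral_kernel (hm.ennreal_ofReal)
  have hinner : ∀ ω, ∫ x, φ x ∂(K ω) = (∫⁻ x, ENNReal.ofReal (φ x) ∂(K ω)).toReal := by
    intro ω
    rw [integral_eq_lintegral_of_nonneg_ae (Filter.Eventually.of_forall h0)
      hm.aestronglyMeasurable]
  have hLHS : ∫ x, φ x ∂(μ.bind fun ω => K ω)
      = (∫⁻ x, ENNReal.ofReal (φ x) ∂(μ.bind fun ω => K ω)).toReal := by
    rw [integral_eq_lintegral_of_nonneg_ae (Filter.Eventually.of_forall h0)
      hm.aestronglyMeasurable]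
  rw [hLHS, Measure.lintegral_bind (Kernel.measurable K).aemeasurable hm.ennreal_ofReal.aemeasurable]
  rw [show (∫ ω, (∫ x, φ x ∂(K ω)) ∂μ)
      = ∫ ω, (∫⁻ x, ENNReal.ofReal (φ x) ∂(K ω)).toReal ∂μ from by
    exact integral_congr_ae (Filter.Eventually.of_forall hinner)]
  rw [integral_toReal hmeasF.aemeasurable]
  exact Filter.Eventually.of_forall fun ω => lt_of_le_of_lt (hKle ω) ENNReal.one_lt_top

/-- Post-processing can only increase the trade-off function: for probability measures
`P, Q` on `Ω` and any Markov kernel `K` from `Ω` to `Ω'`,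
`T(KP, KQ)(α) ≥ T(P,Q)(α)` for all `α ∈ [0,1]`. -/
theorem tradeoff_postprocessing {Ω Ω' : Type*} [MeasurableSpace Ω] [MeasurableSpace Ω']
    (P Q : Measure Ω) [IsProbabilityMeasure P] [IsProbabilityMeasure Q]
    (K : Kernel Ω Ω') [IsMarkovKernel K] :
    ∀ α ∈ Set.Icc (0 : ℝ) 1,
      tradeoff P Q α ≤ tradeoff (P.bind fun ω => K ω) (Q.bind fun ω => K ω) α := by
  rintro α ⟨hα0, hα1⟩
  unfold tradeoff
  apply csInf_le_csInf
  · -- bdd below by 0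
    refine ⟨0, ?_⟩
    rintro r ⟨φ, hm, h0, h1, hP, rfl⟩
    exact integral_nonneg fun ω => by simp only [Pi.zero_apply]; linarith [h1 ω]
  · -- nonempty: φ' = 0
    refine ⟨∫ x, (1 - (0:ℝ)) ∂(Q.bind fun ω => K ω), 0, measurable_const, fun _ => le_refl 0,
      fun _ => zero_le_one, by simpa using hα0, rfl⟩
  · -- subset
    rintro r ⟨φ', hm, h0, h1, hP, rfl⟩
    refine ⟨fun ω => ∫ x, φ' x ∂(K ω), ?_, ?_, ?_, ?_, ?_⟩
    · have : StronglyMeasurable fun ω => ∫ x, φ' x ∂(K ω) :=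
        MeasureTheory.StronglyMeasurable.integral_kernel_prod_right
          (f := fun _ x => φ' x) (hm.stronglyMeasurable.comp_measurable measurable_snd)
      exact this.measurable
    · exact fun ω => integral_nonneg h0
    · intro ω
      calc ∫ x, φ' x ∂(K ω) ≤ ∫ _, 1 ∂(K ω) := by
            refine integral_mono ?_ (integrable_const 1) h1
            exact (integrable_const 1).mono' hm.aestronglyMeasurable
              (Filter.Eventually.of_forall fun x => by
                rw [Real.norm_of_nonneg (h0 x)]; exact h1 x)
        _ = 1 := by simp
    · rw [← integral_bind_test P K φ' hm h0 h1]; exact hP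
    · have hi : ∀ ω, Integrable φ' (K ω) := fun ω =>
        (integrable_const 1).mono' hm.aestronglyMeasurable
          (Filter.Eventually.of_forall fun x => by
            rw [Real.norm_of_nonneg (h0 x)]; exact h1 x)
      rw [integral_bind_test Q K (fun x => 1 - φ' x) (measurable_const.sub hm)
        (fun x => by linarith [h1 x]) (fun x => by linarith [h0 x])]
      refine integral_congr_ae (Filter.Eventually.of_forall fun ω => ?_)
      show ∫ x, 1 - φ' x ∂(K ω) = 1 - ∫ x, φ' x ∂(K ω)
      rw [integral_sub (integrable_const 1) (hi ω)]
      simp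
end

section
/- Let (I, 𝒥, ν) be a probability space and let (P_i)_{i ∈ I} and (Q_i)_{i ∈ I} be measurable families of probability measures on a measurable space Ω. Let f = T(R₀, R₁) be a trade-off function given by probability measures R₀, R₁ on some measurable space. If T(P_i, Q_i)(α) ≥ f(α) for all α ∈ [0,1] and ν-almost every i ∈ I, then the mixtures P = ∫ P_i dν(i) and Q = ∫ Q_i dν(i) satisfy T(P, Q)(α) ≥ f(α) for all α ∈ [0,1]. -/
open MeasureTheory ProbabilityTheory
open scoped ProbabilityTheory NNReal ENNReal

section Aux

variable {Ω : Type*} [MeasurableSpace Ω]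

lemma test_integrable (μ : Measure Ω) [IsFiniteMeasure μ] {φ : Ω → ℝ}
    (hm : AEStronglyMeasurable φ μ) (h0 : ∀ ω, 0 ≤ φ ω) (h1 : ∀ ω, φ ω ≤ 1) :
    Integrable φ μ := by
  refine (integrable_const (1 : ℝ)).mono' hm ?_
  filter_upwards with ω
  rw [Real.norm_eq_abs, abs_of_nonneg (h0 ω)]
  exact h1 ω

lemma tradeoff_bddBelow (P Q : Measure Ω) (α : ℝ) :
    BddBelow { r : ℝ | ∃ φ : Ω → ℝ, Measurable φ ∧ (∀ ω, 0 ≤ φ ω) ∧ (∀ ω, φ ω ≤ 1) ∧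
      (∫ ω, φ ω ∂P) ≤ α ∧ r = ∫ ω, (1 - φ ω) ∂Q } := by
  refine ⟨0, ?_⟩
  rintro r ⟨φ, hφm, h0, h1, hlev, rfl⟩
  exact integral_nonneg fun ω => sub_nonneg.mpr (h1 ω)

lemma tradeoff_set_nonempty (P Q : Measure Ω) {α : ℝ} (hα : 0 ≤ α) :
    { r : ℝ | ∃ φ : Ω → ℝ, Measurable φ ∧ (∀ ω, 0 ≤ φ ω) ∧ (∀ ω, φ ω ≤ 1) ∧
      (∫ ω, φ ω ∂P) ≤ α ∧ r = ∫ ω, (1 - φ ω) ∂Q }.Nonempty := by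
  refine ⟨∫ ω, (1 - (0 : ℝ)) ∂Q, fun _ => 0, measurable_const, fun _ => le_rfl,
    fun _ => zero_le_one, by simpa using hα, rfl⟩

lemma tradeoff_le (P Q : Measure Ω) {α : ℝ} {φ : Ω → ℝ} (hm : Measurable φ)
    (h0 : ∀ ω, 0 ≤ φ ω) (h1 : ∀ ω, φ ω ≤ 1) (hlev : (∫ ω, φ ω ∂P) ≤ α) :
    tradeoff P Q α ≤ ∫ ω, (1 - φ ω) ∂Q :=
  csInf_le (tradeoff_bddBelow P Q α) ⟨φ, hm, h0, h1, hlev, rfl⟩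

lemma tradeoff_antitone (P Q : Measure Ω) {α β : ℝ} (hα : 0 ≤ α) (hαβ : α ≤ β) :
    tradeoff P Q β ≤ tradeoff P Q α := by
  refine csInf_le_csInf (tradeoff_bddBelow P Q β) (tradeoff_set_nonempty P Q hα) ?_
  rintro r ⟨φ, hφm, h0, h1, hlev, rfl⟩
  exact ⟨φ, hφm, h0, h1, hlev.trans hαβ, rfl⟩

lemma tradeoff_convexOn (P Q : Measure Ω) [IsFiniteMeasure P] [IsFiniteMeasure Q] :
    ConvexOn ℝ (Set.Icc (0 : ℝ) 1) (tradeoff P Q) := by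
  refine ⟨convex_Icc 0 1, fun p hp q hq a b ha hb hab => ?_⟩
  simp only [smul_eq_mul]
  rcases eq_or_lt_of_le ha with rfl | ha'
  · have hb1 : b = 1 := by linarith
    subst hb1
    simp
  rcases eq_or_lt_of_le hb with rfl | hb'
  · have ha1 : a = 1 := by linarith
    subst ha1
    simp
  -- main case : a > 0, b > 0
  have key : ∀ r ∈ { r : ℝ | ∃ φ : Ω → ℝ, Measurable φ ∧ (∀ ω, 0 ≤ φ ω) ∧ (∀ ω, φ ω ≤ 1) ∧
      (∫ ω, φ ω ∂P) ≤ p ∧ r = ∫ ω, (1 - φ ω) ∂Q },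
      ∀ r' ∈ { r : ℝ | ∃ φ : Ω → ℝ, Measurable φ ∧ (∀ ω, 0 ≤ φ ω) ∧ (∀ ω, φ ω ≤ 1) ∧
      (∫ ω, φ ω ∂P) ≤ q ∧ r = ∫ ω, (1 - φ ω) ∂Q },
      tradeoff P Q (a * p + b * q) ≤ a * r + b * r' := by
    rintro r ⟨φ, hφm, hφ0, hφ1, hφlev, rfl⟩ r' ⟨ψ, hψm, hψ0, hψ1, hψlev, rfl⟩
    have hχm : Measurable fun ω => a * φ ω + b * ψ ω :=
      (hφm.const_mul a).add (hψm.const_mul b)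
    have hχ0 : ∀ ω, 0 ≤ a * φ ω + b * ψ ω := fun ω =>
      add_nonneg (mul_nonneg ha (hφ0 ω)) (mul_nonneg hb (hψ0 ω))
    have hχ1 : ∀ ω, a * φ ω + b * ψ ω ≤ 1 := fun ω => by
      nlinarith [hφ1 ω, hψ1 ω]
    have hφi : Integrable φ P := test_integrable P hφm.aestronglyMeasurable hφ0 hφ1
    have hψi : Integrable ψ P := test_integrable P hψm.aestronglyMeasurable hψ0 hψ1
    have hφi' : Integrable φ Q := test_integrable Q hφm.aestronglyMeasurable hφ0 hφ1
    have hψi' : Integrable ψ Q := test_integrable Q hψm.aestronglyMeasurable hψ0 hψ1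
    have hlev : (∫ ω, (a * φ ω + b * ψ ω) ∂P) ≤ a * p + b * q := by
      rw [integral_add (hφi.const_mul a) (hψi.const_mul b), integral_const_mul,
        integral_const_mul]
      have h1 := mul_le_mul_of_nonneg_left hφlev ha
      have h2 := mul_le_mul_of_nonneg_left hψlev hb
      linarith
    have e1 : Integrable (fun ω => a * (1 - φ ω)) Q :=
      ((integrable_const 1).sub hφi').const_mul a
    have e2 : Integrable (fun ω => b * (1 - ψ ω)) Q :=
      ((integrable_const 1).sub hψi').const_mul b
    have hpt : ∀ ω, 1 - (a * φ ω + b * ψ ω) = a * (1 - φ ω) + b * (1 - ψ ω) := fun ω => by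
      linear_combination -(hab : a + b = 1)
    have hβ : (∫ ω, (1 - (a * φ ω + b * ψ ω)) ∂Q)
        = a * (∫ ω, (1 - φ ω) ∂Q) + b * (∫ ω, (1 - ψ ω) ∂Q) := by
      simp only [hpt]
      rw [integral_add e1 e2, integral_const_mul, integral_const_mul]
    have := tradeoff_le P Q hχm hχ0 hχ1 hlev
    rw [hβ] at this
    exact this
  have hp0 : (0 : ℝ) ≤ p := hp.1
  have hq0 : (0 : ℝ) ≤ q := hq.1
  -- conclude via two nested `le_csInf`
  have step1 : ∀ r ∈ { r : ℝ | ∃ φ : Ω → ℝ, Measurable φ ∧ (∀ ω, 0 ≤ φ ω) ∧ (∀ ω, φ ω ≤ 1) ∧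
      (∫ ω, φ ω ∂P) ≤ p ∧ r = ∫ ω, (1 - φ ω) ∂Q },
      tradeoff P Q (a * p + b * q) - a * r ≤ b * tradeoff P Q q := by
    intro r hr
    have h2 : (tradeoff P Q (a * p + b * q) - a * r) / b ≤ tradeoff P Q q := by
      refine le_csInf (tradeoff_set_nonempty P Q hq0) fun r' hr' => ?_
      have := key r hr r' hr'
      rw [div_le_iff₀ hb']
      linarith
    calc tradeoff P Q (a * p + b * q) - a * r
        = ((tradeoff P Q (a * p + b * q) - a * r) / b) * b := by field_simp
      _ ≤ tradeoff P Q q * b := by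
          exact mul_le_mul_of_nonneg_right h2 hb
      _ = b * tradeoff P Q q := mul_comm _ _
  have step2 : tradeoff P Q (a * p + b * q) - b * tradeoff P Q q ≤ a * tradeoff P Q p := by
    have h2 : (tradeoff P Q (a * p + b * q) - b * tradeoff P Q q) / a ≤ tradeoff P Q p := by
      refine le_csInf (tradeoff_set_nonempty P Q hp0) fun r hr => ?_
      have := step1 r hr
      rw [div_le_iff₀ ha']
      linarith
    calc tradeoff P Q (a * p + b * q) - b * tradeoff P Q q
        = ((tradeoff P Q (a * p + b * q) - b * tradeoff P Q q) / a) * a := by field_simp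
      _ ≤ tradeoff P Q p * a := mul_le_mul_of_nonneg_right h2 ha
      _ = a * tradeoff P Q p := mul_comm _ _
  linarith

/-- Existence of a supporting line at an interior point for a convex function on `[0,1]`. -/
lemma exists_supporting_line {f : ℝ → ℝ} (hf : ConvexOn ℝ (Set.Icc (0 : ℝ) 1) f)
    {m : ℝ} (hm : m ∈ Set.Ioo (0 : ℝ) 1) :
    ∃ s : ℝ, ∀ x ∈ Set.Icc (0 : ℝ) 1, f m + s * (x - m) ≤ f x := by
  set T : Set ℝ := (fun y => (f y - f m) / (y - m)) '' Set.Ioc m 1 with hT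
  have hmI : m ∈ Set.Icc (0 : ℝ) 1 := ⟨hm.1.le, hm.2.le⟩
  have hne : T.Nonempty := ⟨_, ⟨1, ⟨hm.2, le_rfl⟩, rfl⟩⟩
  have hbdd : BddBelow T := by
    refine ⟨(f m - f 0) / (m - 0), ?_⟩
    rintro _ ⟨y, hy, rfl⟩
    exact hf.slope_mono_adjacent ⟨le_rfl, zero_le_one⟩ ⟨(hm.1.trans hy.1).le, hy.2⟩ hm.1 hy.1
  refine ⟨sInf T, fun x hx => ?_⟩
  rcases lt_trichotomy x m with hxm | rfl | hmx
  · have h1 : (f m - f x) / (m - x) ≤ sInf T := by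
      refine le_csInf hne ?_
      rintro _ ⟨y, hy, rfl⟩
      exact hf.slope_mono_adjacent hx ⟨(hm.1.trans hy.1).le, hy.2⟩ hxm hy.1
    have h2 : f m - f x ≤ sInf T * (m - x) := (div_le_iff₀ (by linarith)).mp h1
    nlinarith
  · simp
  · have h1 : sInf T ≤ (f x - f m) / (x - m) := csInf_le hbdd ⟨x, ⟨hmx, hx.2⟩, rfl⟩
    have h2 : sInf T * (x - m) ≤ f x - f m := (le_div_iff₀ (by linarith)).mp h1
    linarith

lemma integral_test_bind {I : Type*} [MeasurableSpace I] (ν : Measure I)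
    (P : Kernel I Ω) [IsMarkovKernel P] {φ : Ω → ℝ} (hm : Measurable φ)
    (h0 : ∀ ω, 0 ≤ φ ω) (h1 : ∀ ω, φ ω ≤ 1) :
    ∫ ω, φ ω ∂(ν.bind fun i => P i) = ∫ i, ∫ ω, φ ω ∂(P i) ∂ν := by
  have hof : Measurable fun ω => ENNReal.ofReal (φ ω) := hm.ennreal_ofReal
  have hbound : ∀ i, (∫⁻ ω, ENNReal.ofReal (φ ω) ∂(P i)) ≤ 1 := by
    intro i
    calc (∫⁻ ω, ENNReal.ofReal (φ ω) ∂(P i))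
        ≤ ∫⁻ _ω, 1 ∂(P i) := lintegral_mono fun ω => ENNReal.ofReal_le_one.mpr (h1 ω)
      _ = 1 := by simp
  rw [integral_eq_lintegral_of_nonneg_ae (Filter.Eventually.of_forall h0)
      hm.aestronglyMeasurable,
    Measure.lintegral_bind (P.measurable.aemeasurable) hof.aemeasurable]
  have hin : ∀ i, ∫ ω, φ ω ∂(P i) = (∫⁻ ω, ENNReal.ofReal (φ ω) ∂(P i)).toReal := fun i =>
    integral_eq_lintegral_of_nonneg_ae (Filter.Eventually.of_forall h0) hm.aestronglyMeasurable
  simp_rw [hin]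
  rw [integral_toReal (Measurable.lintegral_kernel hof).aemeasurable
    (Filter.Eventually.of_forall fun i => lt_of_le_of_lt (hbound i) ENNReal.one_lt_top)]

end Aux

/-- Mixtures preserve trade-off lower bounds: if `T(P_i, Q_i) ≥ f` on `[0,1]` for
`ν`-almost every `i`, where `f = T(R₀, R₁)` is a trade-off function, then the mixtures
`P = ∫ P_i dν` and `Q = ∫ Q_i dν` satisfy `T(P, Q) ≥ f` on `[0,1]`. -/
theorem tradeoff_mixture {I Ω Z : Type*}
    [MeasurableSpace I] [MeasurableSpace Ω] [MeasurableSpace Z]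
    (ν : Measure I) [IsProbabilityMeasure ν]
    (P Q : Kernel I Ω) [IsMarkovKernel P] [IsMarkovKernel Q]
    (R₀ R₁ : Measure Z) [IsProbabilityMeasure R₀] [IsProbabilityMeasure R₁]
    (h : ∀ᵐ i ∂ν, ∀ α ∈ Set.Icc (0 : ℝ) 1, tradeoff R₀ R₁ α ≤ tradeoff (P i) (Q i) α) :
    ∀ α ∈ Set.Icc (0 : ℝ) 1,
      tradeoff R₀ R₁ α ≤ tradeoff (ν.bind fun i => P i) (ν.bind fun i => Q i) α := by
  intro α hα
  refine le_csInf (tradeoff_set_nonempty _ _ hα.1) ?_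
  rintro r ⟨φ, hφm, hφ0, hφ1, hlev, rfl⟩
  set f : ℝ → ℝ := tradeoff R₀ R₁ with hf
  -- the per-index levels and errors
  set a : I → ℝ := fun i => ∫ ω, φ ω ∂(P i) with ha
  set b : I → ℝ := fun i => ∫ ω, (1 - φ ω) ∂(Q i) with hb
  have hψm : Measurable fun ω => 1 - φ ω := measurable_const.sub hφm
  have hψ0 : ∀ ω, 0 ≤ 1 - φ ω := fun ω => by linarith [hφ1 ω]
  have hψ1 : ∀ ω, 1 - φ ω ≤ 1 := fun ω => by linarith [hφ0 ω]
  have ha_meas : StronglyMeasurable a :=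
    StronglyMeasurable.integral_kernel_prod_right (κ := P)
      ((hφm.comp measurable_snd).stronglyMeasurable :
        StronglyMeasurable (Function.uncurry fun (_ : I) ω => φ ω))
  have hb_meas : StronglyMeasurable b :=
    StronglyMeasurable.integral_kernel_prod_right (κ := Q)
      ((hψm.comp measurable_snd).stronglyMeasurable :
        StronglyMeasurable (Function.uncurry fun (_ : I) ω => 1 - φ ω))
  have ha0 : ∀ i, 0 ≤ a i := fun i => integral_nonneg hφ0
  have ha1 : ∀ i, a i ≤ 1 := fun i => by
    calc a i ≤ ∫ _ω, (1 : ℝ) ∂(P i) :=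
          integral_mono (test_integrable _ hφm.aestronglyMeasurable hφ0 hφ1)
            (integrable_const 1) hφ1
      _ = 1 := by simp
  have hb0 : ∀ i, 0 ≤ b i := fun i => integral_nonneg hψ0
  have hb1 : ∀ i, b i ≤ 1 := fun i => by
    calc b i ≤ ∫ _ω, (1 : ℝ) ∂(Q i) :=
          integral_mono (test_integrable _ hψm.aestronglyMeasurable hψ0 hψ1)
            (integrable_const 1) hψ1
      _ = 1 := by simp
  have ha_int : Integrable a ν := test_integrable ν ha_meas.aestronglyMeasurable ha0 ha1
  have hb_int : Integrable b ν := test_integrable ν hb_meas.aestronglyMeasurable hb0 hb1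
  have hmean : (∫ i, a i ∂ν) = ∫ ω, φ ω ∂(ν.bind fun i => P i) :=
    (integral_test_bind ν P hφm hφ0 hφ1).symm
  have hr_eq : (∫ ω, (1 - φ ω) ∂(ν.bind fun i => Q i)) = ∫ i, b i ∂ν :=
    integral_test_bind ν Q hψm hψ0 hψ1
  rw [hr_eq]
  set m : ℝ := ∫ i, a i ∂ν with hmdef
  have hmα : m ≤ α := by rw [hmean]; exact hlev
  have hm0 : 0 ≤ m := integral_nonneg ha0
  have hm1 : m ≤ 1 := by
    calc m ≤ ∫ _i, (1 : ℝ) ∂ν := integral_mono ha_int (integrable_const 1) ha1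
      _ = 1 := by simp
  have habove : ∀ᵐ i ∂ν, f (a i) ≤ b i := by
    filter_upwards [h] with i hi
    exact (hi (a i) ⟨ha0 i, ha1 i⟩).trans (tradeoff_le (P i) (Q i) hφm hφ0 hφ1 le_rfl)
  have hconv : ConvexOn ℝ (Set.Icc (0 : ℝ) 1) f := tradeoff_convexOn R₀ R₁
  rcases eq_or_lt_of_le hm0 with hm0' | hm0'
  · -- m = 0 : a = 0 a.e.
    have haz : a =ᵐ[ν] 0 :=
      (integral_eq_zero_iff_of_nonneg_ae (Filter.Eventually.of_forall ha0) ha_int).mp hm0'.symm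
    have hae : ∀ᵐ i ∂ν, f α ≤ b i := by
      filter_upwards [habove, haz] with i hi hz
      have : f α ≤ f (a i) := by
        rw [hz]; exact tradeoff_antitone R₀ R₁ le_rfl hα.1
      exact this.trans hi
    calc f α = ∫ _i, f α ∂ν := by simp
      _ ≤ ∫ i, b i ∂ν := integral_mono_ae (integrable_const _) hb_int hae
  rcases eq_or_lt_of_le hm1 with hm1' | hm1'
  · -- m = 1 : a = 1 a.e., and α = 1
    have hα1 : α = 1 := le_antisymm hα.2 (hm1' ▸ hmα)
    have hz : (∫ i, (1 - a i) ∂ν) = 0 := by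
      rw [integral_sub (integrable_const 1) ha_int, ← hmdef, hm1']
      simp
    have h1a_int : Integrable (fun i => 1 - a i) ν := (integrable_const 1).sub ha_int
    have haz : (fun i => 1 - a i) =ᵐ[ν] 0 :=
      (integral_eq_zero_iff_of_nonneg_ae
        (Filter.Eventually.of_forall fun i => sub_nonneg.mpr (ha1 i))
        h1a_int).mp hz
    have hae : ∀ᵐ i ∂ν, f α ≤ b i := by
      filter_upwards [habove, haz] with i hi hz1
      have h1 : a i = 1 := by
        have := hz1
        simp only [Pi.zero_apply] at this
        linarith
      rw [hα1, ← h1]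
      exact hi
    calc f α = ∫ _i, f α ∂ν := by simp
      _ ≤ ∫ i, b i ∂ν := integral_mono_ae (integrable_const _) hb_int hae
  · -- 0 < m < 1 : supporting line
    obtain ⟨s, hs⟩ := exists_supporting_line hconv ⟨hm0', hm1'⟩
    have hae : ∀ᵐ i ∂ν, f m + s * (a i - m) ≤ b i := by
      filter_upwards [habove] with i hi
      exact (hs (a i) ⟨ha0 i, ha1 i⟩).trans hi
    have hsub : Integrable (fun i => a i - m) ν := ha_int.sub (integrable_const m)
    have hmul : Integrable (fun i => s * (a i - m)) ν := hsub.const_mul s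
    have hint : Integrable (fun i => f m + s * (a i - m)) ν :=
      (integrable_const _).add hmul
    have hval : (∫ i, (f m + s * (a i - m)) ∂ν) = f m := by
      rw [integral_add (integrable_const _) hmul,
        integral_const_mul, integral_sub ha_int (integrable_const m), integral_const,
        probReal_univ, integral_const, probReal_univ, ← hmdef]
      simp
    have h2 : f m ≤ ∫ i, b i ∂ν := by
      rw [← hval]
      exact integral_mono_ae hint hb_int hae
    exact (tradeoff_antitone R₀ R₁ hm0 hmα).trans h2
end

section
/- For all μ, ν ≥ 0, the tensor product of the Gaussian trade-off functions G_μ and G_ν is again a Gaussian trade-off function: T(N(0,1) × N(0,1), N(μ,1) × N(ν,1))(α) = G_{√(μ²+ν²)}(α) for all α ∈ [0,1], where × denotes the product of probability measures on ℝ × ℝ. -/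
open MeasureTheory ProbabilityTheory
open scoped ProbabilityTheory NNReal ENNReal

/-- The Gaussian trade-off function `G_μ = T(N(0,1), N(μ,1))`. -/
noncomputable def Gtrade (μ : ℝ) : ℝ → ℝ :=
  tradeoff (gaussianReal 0 1) (gaussianReal μ 1)

/- ### Auxiliary material: rotations of the plane and 2-dimensional Gaussians -/

/-- The rotation `(x, y) ↦ (ax - by, bx + ay)` as a linear map. -/
noncomputable def rotLinMap (a b : ℝ) : (ℝ × ℝ) →ₗ[ℝ] (ℝ × ℝ) :=
  LinearMap.prod (a • LinearMap.fst ℝ ℝ ℝ - b • LinearMap.snd ℝ ℝ ℝ)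
                 (b • LinearMap.fst ℝ ℝ ℝ + a • LinearMap.snd ℝ ℝ ℝ)

lemma rotLinMap_apply (a b x y : ℝ) : rotLinMap a b (x, y) = (a*x - b*y, b*x + a*y) := by
  simp [rotLinMap, mul_comm]

lemma rotLinMap_det (a b : ℝ) : LinearMap.det (rotLinMap a b) = a^2 + b^2 := by
  rw [← LinearMap.det_toMatrix (Module.Basis.finTwoProd ℝ), Matrix.det_fin_two]
  simp [LinearMap.toMatrix_apply, rotLinMap, Module.Basis.finTwoProd]
  ring

/-- The rotation `(x, y) ↦ (ax - by, bx + ay)` (for `a² + b² = 1`) as a measurable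
equivalence of `ℝ × ℝ`. -/
noncomputable def rotEquiv (a b : ℝ) (hab : a^2 + b^2 = 1) : (ℝ × ℝ) ≃ᵐ (ℝ × ℝ) where
  toFun p := (a*p.1 - b*p.2, b*p.1 + a*p.2)
  invFun p := (a*p.1 + b*p.2, -b*p.1 + a*p.2)
  left_inv p := by
    obtain ⟨x, y⟩ := p
    simp only [Prod.mk.injEq]
    constructor
    · linear_combination x * hab
    · linear_combination y * hab
  right_inv p := by
    obtain ⟨x, y⟩ := p
    simp only [Prod.mk.injEq]
    constructor
    · linear_combination x * hab
    · linear_combination y * hab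
  measurable_toFun :=
    ((measurable_fst.const_mul a).sub (measurable_snd.const_mul b)).prodMk
      ((measurable_fst.const_mul b).add (measurable_snd.const_mul a))
  measurable_invFun :=
    ((measurable_fst.const_mul a).add (measurable_snd.const_mul b)).prodMk
      ((measurable_fst.const_mul (-b)).add (measurable_snd.const_mul a))

lemma rotEquiv_apply (a b : ℝ) (hab : a^2 + b^2 = 1) (p : ℝ × ℝ) :
    rotEquiv a b hab p = (a*p.1 - b*p.2, b*p.1 + a*p.2) := rfl

lemma rotEquiv_symm_apply (a b : ℝ) (hab : a^2 + b^2 = 1) (p : ℝ × ℝ) :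
    (rotEquiv a b hab).symm p = (a*p.1 + b*p.2, -b*p.1 + a*p.2) := rfl

lemma coe_rotEquiv (a b : ℝ) (hab : a^2 + b^2 = 1) :
    ⇑(rotEquiv a b hab) = ⇑(rotLinMap a b) := by
  funext p
  obtain ⟨x, y⟩ := p
  rw [rotLinMap_apply]
  rfl

/-- Rotations preserve the Lebesgue measure on the plane. -/
lemma volume_map_rotEquiv (a b : ℝ) (hab : a^2 + b^2 = 1) :
    (volume : Measure (ℝ × ℝ)).map (rotEquiv a b hab) = volume := by
  rw [coe_rotEquiv,
    Measure.map_linearMap_addHaar_eq_smul_addHaar _ (by rw [rotLinMap_det, hab]; norm_num),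
    rotLinMap_det, hab]
  norm_num

lemma map_withDensity_measurableEquiv {X : Type*} [MeasurableSpace X] (ρ : Measure X)
    (e : X ≃ᵐ X) (he : ρ.map e = ρ) {f : X → ℝ≥0∞} (hf : Measurable f) :
    (ρ.withDensity f).map e = ρ.withDensity (f ∘ e.symm) := by
  ext s hs
  rw [Measure.map_apply e.measurable hs, withDensity_apply _ (e.measurable hs),
    withDensity_apply _ hs]
  conv_rhs => rw [← he]
  rw [setLIntegral_map hs (hf.comp e.symm.measurable) e.measurable]
  simp

/-- The product of two Gaussian measures as a density against planar Lebesgue measure. -/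
lemma gaussian_prod_eq_withDensity (m m' : ℝ) :
    (gaussianReal m 1).prod (gaussianReal m' 1)
      = (volume : Measure (ℝ × ℝ)).withDensity
          (fun p => gaussianPDF m 1 p.1 * gaussianPDF m' 1 p.2) := by
  refine Measure.prod_eq fun s t hs ht => ?_
  rw [withDensity_apply _ (hs.prod ht), Measure.volume_eq_prod, ← Measure.prod_restrict,
    lintegral_prod_mul (measurable_gaussianPDF m 1).aemeasurable
      (measurable_gaussianPDF m' 1).aemeasurable,
    gaussianReal_apply _ one_ne_zero, gaussianReal_apply _ one_ne_zero]

lemma gaussianPDFReal_rot (a b c u v : ℝ) (hab : a^2 + b^2 = 1) :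
    gaussianPDFReal c 1 (a*u + b*v) * gaussianPDFReal 0 1 (-b*u + a*v)
      = gaussianPDFReal (a*c) 1 u * gaussianPDFReal (b*c) 1 v := by
  simp only [gaussianPDFReal]
  push_cast
  rw [mul_mul_mul_comm, ← Real.exp_add, mul_mul_mul_comm, ← Real.exp_add]
  congr 1
  rw [← add_div, ← add_div]
  congr 1
  ring_nf
  nlinarith [sq_nonneg u, sq_nonneg v]

/-- Pushing `N(c,1) × N(0,1)` forward through the rotation gives `N(ac,1) × N(bc,1)`. -/
lemma gaussian_prod_map_rotEquiv (a b c : ℝ) (hab : a^2 + b^2 = 1) :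
    ((gaussianReal c 1).prod (gaussianReal 0 1)).map (rotEquiv a b hab)
      = (gaussianReal (a*c) 1).prod (gaussianReal (b*c) 1) := by
  have hm : Measurable fun p : ℝ × ℝ => gaussianPDF c 1 p.1 * gaussianPDF 0 1 p.2 :=
    ((measurable_gaussianPDF c 1).comp measurable_fst).mul
      ((measurable_gaussianPDF 0 1).comp measurable_snd)
  rw [gaussian_prod_eq_withDensity, gaussian_prod_eq_withDensity,
    map_withDensity_measurableEquiv _ _ (volume_map_rotEquiv a b hab) hm]
  congr 1
  funext p
  obtain ⟨u, v⟩ := p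
  simp only [Function.comp_apply, rotEquiv_symm_apply]
  simp only [gaussianPDF]
  rw [← ENNReal.ofReal_mul (gaussianPDFReal_nonneg _ _ _),
    ← ENNReal.ofReal_mul (gaussianPDFReal_nonneg _ _ _),
    gaussianPDFReal_rot a b c u v hab]

/- ### Trade-off plumbing -/

lemma integrable_test {Ω : Type*} [MeasurableSpace Ω] (P : Measure Ω) [IsFiniteMeasure P]
    {φ : Ω → ℝ} (hm : Measurable φ) (h0 : ∀ ω, 0 ≤ φ ω) (h1 : ∀ ω, φ ω ≤ 1) :
    Integrable φ P := by
  refine Integrable.mono' (integrable_const 1) hm.aestronglyMeasurable (ae_of_all _ fun ω => ?_)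
  rw [Real.norm_eq_abs, abs_le]
  exact ⟨by linarith [h0 ω], h1 ω⟩

lemma integral_one_sub_test {Ω : Type*} [MeasurableSpace Ω] (P : Measure Ω)
    [IsProbabilityMeasure P] {φ : Ω → ℝ} (h : Integrable φ P) :
    ∫ ω, (1 - φ ω) ∂P = 1 - ∫ ω, φ ω ∂P := by
  rw [integral_sub (integrable_const 1) h, integral_const]
  simp

/-- Core identity: the trade-off function of the pair `(N(0,1)², N(ac,1) × N(bc,1))` equals
that of the pair `(N(0,1), N(c,1))`, whenever `a² + b² = 1`. The two trade-off sets are in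
fact equal: one inclusion comes from composing a one-dimensional test with the sufficient
statistic `p ↦ a p₁ + b p₂`, the other from averaging a two-dimensional test over the fibers
of this statistic (a Gaussian rotation argument). -/
lemma tradeoff_rot (a b c : ℝ) (hab : a^2 + b^2 = 1) (α : ℝ) :
    tradeoff ((gaussianReal 0 1).prod (gaussianReal 0 1))
      ((gaussianReal (a*c) 1).prod (gaussianReal (b*c) 1)) α
      = tradeoff (gaussianReal 0 1) (gaussianReal c 1) α := by
  set P := gaussianReal 0 1 with hP
  set Pc := gaussianReal c 1 with hPc
  set e := rotEquiv a b hab with he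
  have h0 : (P.prod P).map e = P.prod P := by
    have := gaussian_prod_map_rotEquiv a b 0 hab
    simpa using this
  have hQ : (Pc.prod P).map e = (gaussianReal (a*c) 1).prod (gaussianReal (b*c) 1) :=
    gaussian_prod_map_rotEquiv a b c hab
  have hT : Measurable fun p : ℝ × ℝ => a * p.1 + b * p.2 :=
    (measurable_fst.const_mul a).add (measurable_snd.const_mul b)
  have hTE : ∀ q : ℝ × ℝ, a * (e q).1 + b * (e q).2 = q.1 := fun q => by
    rw [he, rotEquiv_apply]
    dsimp only
    linear_combination q.1 * hab
  -- pushforward integral computation for composed tests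
  have comp_eq : ∀ (m : ℝ) (g : ℝ → ℝ), Measurable g →
      ∫ p, g (a * p.1 + b * p.2) ∂(((gaussianReal m 1).prod P).map e)
        = ∫ x, g x ∂(gaussianReal m 1) := by
    intro m g hg
    have hgm : Measurable fun p : ℝ × ℝ => g (a * p.1 + b * p.2) := hg.comp hT
    rw [integral_map e.measurable.aemeasurable hgm.aestronglyMeasurable]
    simp only [hTE]
    have hfst : ((gaussianReal m 1).prod P).map Prod.fst = gaussianReal m 1 := by
      rw [Measure.map_fst_prod]
      simp
    calc ∫ q : ℝ × ℝ, g q.1 ∂((gaussianReal m 1).prod P)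
        = ∫ x, g x ∂(((gaussianReal m 1).prod P).map Prod.fst) := by
          rw [integral_map measurable_fst.aemeasurable]
          rw [hfst]
          exact hg.aestronglyMeasurable
      _ = ∫ x, g x ∂(gaussianReal m 1) := by rw [hfst]
  -- fiber-averaging computation
  have avg_eq : ∀ (m : ℝ) (g : ℝ × ℝ → ℝ), Measurable g → (∀ p, 0 ≤ g p) → (∀ p, g p ≤ 1) →
      ∫ t, (∫ z, g (e (t, z)) ∂P) ∂(gaussianReal m 1)
        = ∫ p, g p ∂(((gaussianReal m 1).prod P).map e) := by
    intro m g hg hg0 hg1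
    rw [integral_map e.measurable.aemeasurable hg.aestronglyMeasurable]
    have hint : Integrable (Function.uncurry fun t z => g (e (t, z)))
        ((gaussianReal m 1).prod P) := by
      exact integrable_test _ (hg.comp e.measurable) (fun p => hg0 _) (fun p => hg1 _)
    exact integral_integral hint
  unfold tradeoff
  congr 1
  ext r
  constructor
  · -- a 2-dimensional test gives a 1-dimensional test by averaging over fibers
    rintro ⟨φ, hφm, hφ0, hφ1, hφα, hφr⟩
    set ψ : ℝ → ℝ := fun t => ∫ z, φ (e (t, z)) ∂P with hψ
    have hψm : Measurable ψ :=
      ((hφm.comp e.measurable).stronglyMeasurable.integral_prod_right').measurable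
    have hψ0 : ∀ t, 0 ≤ ψ t := fun t => integral_nonneg fun z => hφ0 _
    have hψ1 : ∀ t, ψ t ≤ 1 := by
      intro t
      calc ψ t ≤ ∫ _z, (1 : ℝ) ∂P := by
            refine integral_mono ?_ (integrable_const 1) fun z => hφ1 _
            exact integrable_test _ (hφm.comp (e.measurable.comp (by fun_prop)))
              (fun z => hφ0 _) (fun z => hφ1 _)
        _ = 1 := by simp
    have hint0 : ∫ t, ψ t ∂P = ∫ p, φ p ∂(P.prod P) := by
      rw [hψ]
      have := avg_eq 0 φ hφm hφ0 hφ1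
      rw [← hP] at this
      rw [this, h0]
    have hintc : ∫ t, ψ t ∂Pc
        = ∫ p, φ p ∂((gaussianReal (a*c) 1).prod (gaussianReal (b*c) 1)) := by
      rw [hψ]
      have := avg_eq c φ hφm hφ0 hφ1
      rw [← hPc] at this
      rw [this, hQ]
    refine ⟨ψ, hψm, hψ0, hψ1, ?_, ?_⟩
    · rw [hint0]; exact hφα
    · rw [hφr, integral_one_sub_test _ (integrable_test _ hφm hφ0 hφ1),
        integral_one_sub_test _ (integrable_test _ hψm hψ0 hψ1), hintc]
  · -- a 1-dimensional test gives a 2-dimensional test by composition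
    rintro ⟨ψ, hψm, hψ0, hψ1, hψα, hψr⟩
    refine ⟨fun p => ψ (a * p.1 + b * p.2), hψm.comp hT, fun p => hψ0 _, fun p => hψ1 _, ?_, ?_⟩
    · have := comp_eq 0 ψ hψm
      rw [← hP, h0] at this
      rw [this]
      exact hψα
    · have := comp_eq c (fun x => 1 - ψ x) (measurable_const.sub hψm)
      rw [← hPc, hQ] at this
      rw [hψr, ← this]

/-- The tensor product of Gaussian trade-off functions is Gaussian:
`T(N(0,1) × N(0,1), N(μ,1) × N(ν,1)) = G_{√(μ²+ν²)}` on `[0,1]`. -/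
theorem gaussian_tradeoff_tensor (μ ν : ℝ) (hμ : 0 ≤ μ) (hν : 0 ≤ ν) :
    ∀ α ∈ Set.Icc (0 : ℝ) 1,
      tradeoff ((gaussianReal 0 1).prod (gaussianReal 0 1))
        ((gaussianReal μ 1).prod (gaussianReal ν 1)) α
        = Gtrade (Real.sqrt (μ ^ 2 + ν ^ 2)) α := by
  intro α _hα
  set c := Real.sqrt (μ ^ 2 + ν ^ 2) with hc
  have hc2 : c ^ 2 = μ ^ 2 + ν ^ 2 := Real.sq_sqrt (by positivity)
  obtain ⟨a, b, hab, hac, hbc⟩ : ∃ a b : ℝ, a^2 + b^2 = 1 ∧ a * c = μ ∧ b * c = ν := by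
    rcases eq_or_ne c 0 with h | h
    · have h0 : μ ^ 2 + ν ^ 2 = 0 := by rw [← hc2, h]; ring
      have hμ0 : μ = 0 := by nlinarith [sq_nonneg μ, sq_nonneg ν]
      have hν0 : ν = 0 := by nlinarith [sq_nonneg μ, sq_nonneg ν]
      exact ⟨1, 0, by norm_num, by rw [h, hμ0, mul_zero], by rw [h, hν0, mul_zero]⟩
    · refine ⟨μ / c, ν / c, ?_, div_mul_cancel₀ _ h, div_mul_cancel₀ _ h⟩
      field_simp
      linarith [hc2]
  rw [← hac, ← hbc]
  exact tradeoff_rot a b c hab α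
end

section
/- For every μ ≥ 0 and every α ∈ (0,1), the Gaussian trade-off function admits the closed form G_μ(α) = Φ(Φ⁻¹(1 − α) − μ), where Φ is the cumulative distribution function of the standard Gaussian measure N(0,1) on ℝ and Φ⁻¹ is its inverse on (0,1). -/
open MeasureTheory ProbabilityTheory
open scoped ProbabilityTheory NNReal ENNReal

section GTaux
open Real

lemma GT_integral_gauss (m : ℝ) (g : ℝ → ℝ) :
    ∫ x, g x ∂(gaussianReal m 1) = ∫ x, gaussianPDFReal m 1 x * g x := by
  rw [gaussianReal_of_var_ne_zero m one_ne_zero]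
  have h : gaussianPDF m 1 = fun x => ((gaussianPDFReal m 1 x).toNNReal : ℝ≥0∞) := by
    ext x; simp [gaussianPDF, ENNReal.ofReal]
  rw [h, integral_withDensity_eq_integral_smul
    ((measurable_gaussianPDFReal m 1).real_toNNReal) g]
  congr 1; ext x
  simp [NNReal.smul_def, Real.coe_toNNReal _ (gaussianPDFReal_nonneg m 1 x)]

lemma GT_noAtoms (m : ℝ) : NoAtoms (gaussianReal m 1) :=
  ⟨fun x => (gaussianReal_absolutelyContinuous m one_ne_zero) (measure_singleton x)⟩

lemma GT_cdf_shift (m x : ℝ) :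
    cdf (gaussianReal m 1) x = cdf (gaussianReal 0 1) (x - m) := by
  have h := gaussianReal_map_add_const (μ := 0) (v := 1) m
  rw [zero_add] at h
  rw [cdf_eq_real, cdf_eq_real, ← h, measureReal_def, measureReal_def,
    Measure.map_apply (measurable_add_const m) measurableSet_Iic]
  congr 2
  ext y
  simp [Set.mem_Iic, ← sub_le_iff_le_add]

lemma GT_pdf_ratio (μ x : ℝ) :
    gaussianPDFReal μ 1 x = gaussianPDFReal 0 1 x * rexp (μ * x - μ ^ 2 / 2) := by
  simp only [gaussianPDFReal]
  rw [mul_assoc _ (rexp _) (rexp _), ← Real.exp_add]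
  congr 1
  push_cast [mul_one]
  ring

lemma GT_int_pdf_mul (m : ℝ) {ψ : ℝ → ℝ} (hm : Measurable ψ) (C : ℝ)
    (hb : ∀ x, |ψ x| ≤ C) :
    Integrable (fun x => gaussianPDFReal m 1 x * ψ x) := by
  have := (integrable_gaussianPDFReal m 1).bdd_mul hm.aestronglyMeasurable
    (ae_of_all _ fun x => by simpa using hb x)
  simpa [mul_comm] using this

lemma GT_int_test (m : ℝ) {φ : ℝ → ℝ} (hm : Measurable φ) (hb : ∀ x, |φ x| ≤ 1) :
    Integrable φ (gaussianReal m 1) :=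
  (integrable_const 1).mono' hm.aestronglyMeasurable (ae_of_all _ fun x => by simpa using hb x)

lemma GT_lower (μ t α : ℝ) (hμ : 0 ≤ μ)
    (hPs : ∫ ω, (Set.Ici t).indicator (fun _ => (1:ℝ)) ω ∂(gaussianReal 0 1) = α)
    (φ : ℝ → ℝ) (hm : Measurable φ) (h0 : ∀ ω, 0 ≤ φ ω) (h1 : ∀ ω, φ ω ≤ 1)
    (hle : ∫ ω, φ ω ∂(gaussianReal 0 1) ≤ α) :
    ∫ ω, (1 - (Set.Ici t).indicator (fun _ => (1:ℝ)) ω) ∂(gaussianReal μ 1) ≤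
      ∫ ω, (1 - φ ω) ∂(gaussianReal μ 1) := by
  set φs : ℝ → ℝ := (Set.Ici t).indicator (fun _ => 1) with hφs
  have hφs_meas : Measurable φs := measurable_const.indicator measurableSet_Ici
  have hφs01 : ∀ ω, 0 ≤ φs ω ∧ φs ω ≤ 1 := fun ω => by
    by_cases h : ω ∈ Set.Ici t <;> simp [hφs, Set.indicator_apply, h]
  have hψb : ∀ x, |φs x - φ x| ≤ 1 := fun x => by
    rw [abs_le]
    constructor <;> nlinarith [(hφs01 x).1, (hφs01 x).2, h0 x, h1 x]
  have hφb : ∀ x, |φ x| ≤ 1 := fun x => by rw [abs_le]; constructor <;> nlinarith [h0 x, h1 x]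
  have hψm : Measurable (fun x => φs x - φ x) := hφs_meas.sub hm
  set c := rexp (μ * t - μ ^ 2 / 2) with hc
  have hcpos : (0:ℝ) < c := Real.exp_pos _
  -- pointwise inequality
  have hpt : ∀ x, 0 ≤ (φs x - φ x) *
      (gaussianPDFReal μ 1 x - c * gaussianPDFReal 0 1 x) := by
    intro x
    have hratio := GT_pdf_ratio μ x
    have hp := gaussianPDFReal_nonneg 0 1 x
    rcases le_or_gt t x with h | h
    · have hφsx : φs x = 1 := by simp [hφs, Set.indicator_apply, h]
      have h2 : c ≤ rexp (μ * x - μ ^ 2 / 2) :=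
        Real.exp_le_exp.mpr (by nlinarith)
      apply mul_nonneg (by rw [hφsx]; linarith [h1 x])
      rw [hratio]; nlinarith
    · have hφsx : φs x = 0 := by simp [hφs, Set.indicator_apply, not_le.mpr h]
      have h2 : rexp (μ * x - μ ^ 2 / 2) ≤ c :=
        Real.exp_le_exp.mpr (by nlinarith)
      have e1 : φs x - φ x ≤ 0 := by rw [hφsx]; linarith [h0 x]
      have e2 : gaussianPDFReal μ 1 x - c * gaussianPDFReal 0 1 x ≤ 0 := by
        rw [hratio]; nlinarith
      nlinarith
  have hI0 : Integrable (fun x => gaussianPDFReal 0 1 x * (φs x - φ x)) :=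
    GT_int_pdf_mul 0 hψm 1 hψb
  have hIμ : Integrable (fun x => gaussianPDFReal μ 1 x * (φs x - φ x)) :=
    GT_int_pdf_mul μ hψm 1 hψb
  have hnn : 0 ≤ ∫ x, (φs x - φ x) *
      (gaussianPDFReal μ 1 x - c * gaussianPDFReal 0 1 x) := integral_nonneg hpt
  have heq : ∫ x, (φs x - φ x) * (gaussianPDFReal μ 1 x - c * gaussianPDFReal 0 1 x)
      = (∫ x, gaussianPDFReal μ 1 x * (φs x - φ x))
        - c * ∫ x, gaussianPDFReal 0 1 x * (φs x - φ x) := by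
    rw [← integral_const_mul, ← integral_sub hIμ (hI0.const_mul c)]
    congr 1; ext x; ring
  -- ∫ (φs - φ) dP ≥ 0
  have hsubP : ∫ x, gaussianPDFReal 0 1 x * (φs x - φ x) =
      α - ∫ ω, φ ω ∂(gaussianReal 0 1) := by
    rw [← GT_integral_gauss,
      integral_sub (GT_int_test 0 hφs_meas fun x => by
        rw [abs_le]; constructor <;> nlinarith [(hφs01 x).1, (hφs01 x).2])
        (GT_int_test 0 hm hφb), hPs]
  have hP0 : 0 ≤ ∫ x, gaussianPDFReal 0 1 x * (φs x - φ x) := by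
    rw [hsubP]; linarith
  have hQ0 : 0 ≤ ∫ x, gaussianPDFReal μ 1 x * (φs x - φ x) := by nlinarith
  have hsubQ : ∫ x, gaussianPDFReal μ 1 x * (φs x - φ x) =
      (∫ ω, φs ω ∂(gaussianReal μ 1)) - ∫ ω, φ ω ∂(gaussianReal μ 1) := by
    rw [← GT_integral_gauss,
      integral_sub (GT_int_test μ hφs_meas fun x => by
        rw [abs_le]; constructor <;> nlinarith [(hφs01 x).1, (hφs01 x).2])
        (GT_int_test μ hm hφb)]
  rw [hsubQ] at hQ0
  rw [integral_sub (integrable_const 1) (GT_int_test μ hφs_meas fun x => by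
        rw [abs_le]; constructor <;> nlinarith [(hφs01 x).1, (hφs01 x).2]),
    integral_sub (integrable_const 1) (GT_int_test μ hm hφb)]
  have : ∫ (_ : ℝ), (1:ℝ) ∂(gaussianReal μ 1) = 1 := by simp
  linarith

end GTaux

/-- Closed form for the Gaussian trade-off function: for `μ ≥ 0` and `α ∈ (0,1)`,
`G_μ(α) = Φ(Φ⁻¹(1 − α) − μ)`, where `Φ` is the standard Gaussian CDF and `Φinv` is
any inverse of `Φ` on `(0,1)`. -/
theorem gaussian_tradeoff_closed_form (μ : ℝ) (hμ : 0 ≤ μ)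
    (Φinv : ℝ → ℝ)
    (hΦinv : ∀ y ∈ Set.Ioo (0 : ℝ) 1, cdf (gaussianReal 0 1) (Φinv y) = y) :
    ∀ α ∈ Set.Ioo (0 : ℝ) 1,
      Gtrade μ α = cdf (gaussianReal 0 1) (Φinv (1 - α) - μ) := by
  rintro α ⟨hα0, hα1⟩
  haveI : NullSingletonClass (gaussianReal (0:ℝ) 1) := GT_noAtoms 0
  haveI : NullSingletonClass (gaussianReal μ 1) := GT_noAtoms μ
  set t := Φinv (1 - α) with ht
  set r := cdf (gaussianReal 0 1) (t - μ) with hr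
  have hcdft : cdf (gaussianReal 0 1) t = 1 - α :=
    hΦinv (1 - α) ⟨by linarith, by linarith⟩
  have hPIic : gaussianReal 0 1 (Set.Iic t) = ENNReal.ofReal (1 - α) := by
    rw [← ofReal_cdf (gaussianReal 0 1) t, hcdft]
  have hPIci : gaussianReal 0 1 (Set.Ici t) = ENNReal.ofReal α := by
    rw [← measure_congr (Ioi_ae_eq_Ici (a := t) (μ := gaussianReal 0 1)),
      ← Set.compl_Iic, prob_compl_eq_one_sub measurableSet_Iic, hPIic,
      ← ENNReal.ofReal_one, ← ENNReal.ofReal_sub _ (by linarith)]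
    norm_num
  set φs : ℝ → ℝ := (Set.Ici t).indicator (fun _ => 1) with hφs
  have hφs_meas : Measurable φs := measurable_const.indicator measurableSet_Ici
  have hφs01 : ∀ ω, 0 ≤ φs ω ∧ φs ω ≤ 1 := fun ω => by
    by_cases h : ω ∈ Set.Ici t <;> simp [hφs, Set.indicator_apply, h]
  have hintφsP : ∫ ω, φs ω ∂(gaussianReal 0 1) = α := by
    rw [hφs, integral_indicator_const (1:ℝ) measurableSet_Ici, measureReal_def, hPIci,
      ENNReal.toReal_ofReal hα0.le, smul_eq_mul, mul_one]
  have h1subφs : (fun ω => 1 - φs ω) = (Set.Iio t).indicator (fun _ => (1:ℝ)) := by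
    ext ω
    rcases lt_or_ge ω t with h | h
    · simp [hφs, Set.indicator_apply, h, not_le.mpr h]
    · simp [hφs, Set.indicator_apply, h, not_lt.mpr h]
  have hintφsQ : ∫ ω, (1 - φs ω) ∂(gaussianReal μ 1) = r := by
    rw [show (fun ω => 1 - φs ω) = (Set.Iio t).indicator (fun _ => (1:ℝ)) from h1subφs]
    rw [integral_indicator_const (1:ℝ) measurableSet_Iio, smul_eq_mul, mul_one, measureReal_def,
      measure_congr (Iio_ae_eq_Iic (a := t) (μ := gaussianReal μ 1)),
      ← measureReal_def, ← cdf_eq_real, GT_cdf_shift]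
  set S := { s : ℝ | ∃ φ : ℝ → ℝ, Measurable φ ∧ (∀ ω, 0 ≤ φ ω) ∧ (∀ ω, φ ω ≤ 1) ∧
    (∫ ω, φ ω ∂(gaussianReal 0 1)) ≤ α ∧ s = ∫ ω, (1 - φ ω) ∂(gaussianReal μ 1) } with hS
  have hmem : r ∈ S :=
    ⟨φs, hφs_meas, fun ω => (hφs01 ω).1, fun ω => (hφs01 ω).2, hintφsP.le, hintφsQ.symm⟩
  have hlb : ∀ s ∈ S, r ≤ s := by
    rintro s ⟨φ, hm, h0, h1, hle, rfl⟩
    calc r = ∫ ω, (1 - φs ω) ∂(gaussianReal μ 1) := hintφsQ.symm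
    _ ≤ _ := GT_lower μ t α hμ hintφsP φ hm h0 h1 hle
  have : Gtrade μ α = sInf S := rfl
  rw [this]
  exact le_antisymm (csInf_le ⟨r, hlb⟩ hmem) (le_csInf ⟨r, hmem⟩ hlb)
end

section
/- Let d ∈ ℕ, σ > 0, and a, b ∈ ℝ^d. Let N(a, σ²I_d) denote the product measure ⊗_{i=1}^d N(a_i, σ²) on ℝ^d, where N(m, σ²) is the Gaussian measure on ℝ with mean m and variance σ². Then the trade-off function between the two shifted isotropic Gaussians is Gaussian: T(N(a, σ²I_d), N(b, σ²I_d))(α) = G_{‖a−b‖₂/σ}(α) for all α ∈ [0,1], where ‖·‖₂ is the Euclidean norm on ℝ^d. -/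
open MeasureTheory ProbabilityTheory
open scoped ProbabilityTheory NNReal ENNReal

namespace IsoGaussAux

variable {Ω : Type*} {Ω' : Type*} [MeasurableSpace Ω] [MeasurableSpace Ω']

lemma tset_bddBelow (P Q : Measure Ω) (α : ℝ) :
    BddBelow { r : ℝ | ∃ φ : Ω → ℝ, Measurable φ ∧ (∀ ω, 0 ≤ φ ω) ∧ (∀ ω, φ ω ≤ 1) ∧
      (∫ ω, φ ω ∂P) ≤ α ∧ r = ∫ ω, (1 - φ ω) ∂Q } := by
  refine ⟨0, fun r hr => ?_⟩
  obtain ⟨φ, hm, h0, h1, hint, rfl⟩ := hr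
  exact integral_nonneg fun ω => sub_nonneg.2 (h1 ω)

lemma tset_nonempty (P Q : Measure Ω) [IsProbabilityMeasure P] [IsProbabilityMeasure Q]
    {α : ℝ} (hα : 0 ≤ α) (hα1 : α ≤ 1) :
    Set.Nonempty { r : ℝ | ∃ φ : Ω → ℝ, Measurable φ ∧ (∀ ω, 0 ≤ φ ω) ∧ (∀ ω, φ ω ≤ 1) ∧
      (∫ ω, φ ω ∂P) ≤ α ∧ r = ∫ ω, (1 - φ ω) ∂Q } := by
  refine ⟨∫ ω, (1 - (fun _ : Ω => α) ω) ∂Q, fun _ => α, measurable_const,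
    fun _ => hα, fun _ => hα1, ?_, rfl⟩
  simp

lemma integrable_test (μ : Measure Ω) [IsFiniteMeasure μ] {φ : Ω → ℝ}
    (hm : AEStronglyMeasurable φ μ) (h0 : ∀ ω, 0 ≤ φ ω) (h1 : ∀ ω, φ ω ≤ 1) :
    Integrable φ μ :=
  (integrable_const (1 : ℝ)).mono' hm (ae_of_all _ fun ω => by
    rw [Real.norm_eq_abs, abs_le]
    exact ⟨by linarith [h0 ω], h1 ω⟩)

lemma tradeoff_le_map (P Q : Measure Ω) [IsProbabilityMeasure P] [IsProbabilityMeasure Q]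
    {f : Ω → Ω'} (hf : Measurable f) {α : ℝ} (hα : 0 ≤ α) (hα1 : α ≤ 1) :
    tradeoff P Q α ≤ tradeoff (P.map f) (Q.map f) α := by
  have h1 : IsProbabilityMeasure (P.map f) := Measure.isProbabilityMeasure_map hf.aemeasurable
  have h2 : IsProbabilityMeasure (Q.map f) := Measure.isProbabilityMeasure_map hf.aemeasurable
  refine csInf_le_csInf (tset_bddBelow P Q α) (tset_nonempty _ _ hα hα1) ?_
  rintro r ⟨φ, hm, h0, h1, hint, rfl⟩
  refine ⟨fun ω => φ (f ω), hm.comp hf, fun ω => h0 _, fun ω => h1 _, ?_, ?_⟩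
  · rwa [← integral_map hf.aemeasurable hm.aestronglyMeasurable]
  · rw [integral_map hf.aemeasurable ((hm.const_sub (1:ℝ)).aestronglyMeasurable)]

lemma tradeoff_congr_of_mp {P Q : Measure Ω} {P' Q' : Measure Ω'}
    [IsProbabilityMeasure P] [IsProbabilityMeasure Q]
    [IsProbabilityMeasure P'] [IsProbabilityMeasure Q']
    {f : Ω → Ω'} {g : Ω' → Ω}
    (hfP : MeasurePreserving f P P') (hfQ : MeasurePreserving f Q Q')
    (hgP : MeasurePreserving g P' P) (hgQ : MeasurePreserving g Q' Q)
    {α : ℝ} (hα : 0 ≤ α) (hα1 : α ≤ 1) : tradeoff P Q α = tradeoff P' Q' α := by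
  refine le_antisymm ?_ ?_
  · have h := tradeoff_le_map P Q hfP.measurable hα hα1
    rwa [hfP.map_eq, hfQ.map_eq] at h
  · have h := tradeoff_le_map P' Q' hgP.measurable hα hα1
    rwa [hgP.map_eq, hgQ.map_eq] at h

lemma tradeoff_self (P : Measure Ω) [IsProbabilityMeasure P] {α : ℝ}
    (hα : 0 ≤ α) (hα1 : α ≤ 1) : tradeoff P P α = 1 - α := by
  refine le_antisymm (csInf_le (tset_bddBelow P P α) ?_) (le_csInf (tset_nonempty P P hα hα1) ?_)
  · exact ⟨fun _ => α, measurable_const, fun _ => hα, fun _ => hα1, by simp, by simp⟩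
  · rintro r ⟨φ, hm, h0, h1, hint, rfl⟩
    have hi : Integrable φ P := integrable_test P hm.aestronglyMeasurable h0 h1
    rw [integral_sub (integrable_const 1) hi, integral_const]
    simp only [probReal_univ, ENNReal.toReal_one, smul_eq_mul, one_mul]
    linarith

lemma tradeoff_prod {Ω₁ Ω₂ : Type*} [MeasurableSpace Ω₁] [MeasurableSpace Ω₂]
    (P₁ P₂ : Measure Ω₁) (ν : Measure Ω₂) [IsProbabilityMeasure P₁] [IsProbabilityMeasure P₂]
    [IsProbabilityMeasure ν] {α : ℝ} (hα : 0 ≤ α) (hα1 : α ≤ 1) :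
    tradeoff (P₁.prod ν) (P₂.prod ν) α = tradeoff P₁ P₂ α := by
  refine le_antisymm ?_ ?_
  · have h := tradeoff_le_map (P₁.prod ν) (P₂.prod ν) (measurable_fst) hα hα1
    rwa [Measure.map_fst_prod, Measure.map_fst_prod, measure_univ, one_smul, one_smul] at h
  · refine csInf_le_csInf (tset_bddBelow _ _ _) (tset_nonempty _ _ hα hα1) ?_
    rintro r ⟨φ, hm, h0, h1, hint, rfl⟩
    have hsm : StronglyMeasurable φ := hm.stronglyMeasurable
    have hψm : Measurable fun x => ∫ y, φ (x, y) ∂ν :=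
      hsm.integral_prod_right'.measurable
    have hinteg : ∀ (μ : Measure (Ω₁ × Ω₂)), IsProbabilityMeasure μ → Integrable φ μ :=
      fun μ hμ => integrable_test μ hm.aestronglyMeasurable h0 h1
    have hinteg_y : ∀ (x : Ω₁), Integrable (fun y => φ (x, y)) ν := fun x =>
      integrable_test ν ((hm.comp measurable_prodMk_left).aestronglyMeasurable)
        (fun y => h0 _) (fun y => h1 _)
    refine ⟨fun x => ∫ y, φ (x, y) ∂ν, hψm, fun x => integral_nonneg fun y => h0 _,
      fun x => ?_, ?_, ?_⟩
    · calc ∫ y, φ (x, y) ∂ν ≤ ∫ _, (1 : ℝ) ∂ν :=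
            integral_mono (hinteg_y x) (integrable_const 1) fun y => h1 _
        _ = 1 := by simp
    · show ∫ x, ∫ y, φ (x, y) ∂ν ∂P₁ ≤ α
      rw [← integral_prod φ (hinteg _ inferInstance)]
      exact hint
    · show ∫ ω, 1 - φ ω ∂(P₂.prod ν) = ∫ x, 1 - (∫ y, φ (x, y) ∂ν) ∂P₂
      have hint1 : Integrable (fun ω => 1 - φ ω) (P₂.prod ν) :=
        integrable_test _ ((measurable_const.sub hm).aestronglyMeasurable)
          (fun ω => sub_nonneg.2 (h1 ω)) (fun ω => by linarith [h0 ω])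
      rw [integral_prod (fun ω => 1 - φ ω) hint1]
      congr 1 with x
      rw [integral_sub (integrable_const 1) (hinteg_y x)]
      simp

section Gauss

/-- Integral of a product of functions against a product measure, `Fin` version. -/
lemma lintegral_pi_prod : ∀ {n : ℕ} (μ : Fin n → Measure ℝ), (∀ i, SigmaFinite (μ i)) →
    ∀ (f : Fin n → ℝ → ℝ≥0∞), (∀ i, Measurable (f i)) →
    ∫⁻ x, ∏ i, f i (x i) ∂Measure.pi μ = ∏ i, ∫⁻ t, f i t ∂(μ i) := by
  intro n
  induction n with
  | zero =>
    intro μ _ f _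
    simp [lintegral_one, Measure.pi_univ]
  | succ n ih =>
    intro μ hσ f hf
    haveI := hσ
    have hmeas : Measurable fun p : ℝ × (Fin n → ℝ) =>
        f 0 p.1 * ∏ j, f ((0 : Fin (n+1)).succAbove j) (p.2 j) :=
      ((hf 0).comp measurable_fst).mul
        (Finset.measurable_prod _ fun j _ =>
          (hf _).comp ((measurable_pi_apply j).comp measurable_snd))
    have key : ∫⁻ x, ∏ i, f i (x i) ∂Measure.pi μ
        = ∫⁻ p : ℝ × (Fin n → ℝ),
            f 0 p.1 * ∏ j, f ((0 : Fin (n+1)).succAbove j) (p.2 j)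
            ∂((μ 0).prod (Measure.pi fun j => μ ((0 : Fin (n+1)).succAbove j))) := by
      rw [← (measurePreserving_piFinSuccAbove μ 0).map_eq,
        lintegral_map hmeas (MeasurableEquiv.piFinSuccAbove (fun _ => ℝ) 0).measurable]
      congr 1
      funext x
      rw [Fin.prod_univ_succAbove (fun i => f i (x i)) 0]
      rfl
    have h2 : ∫⁻ p : ℝ × (Fin n → ℝ),
          f 0 p.1 * ∏ j, f ((0 : Fin (n+1)).succAbove j) (p.2 j)
          ∂((μ 0).prod (Measure.pi fun j => μ ((0 : Fin (n+1)).succAbove j)))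
        = (∫⁻ t, f 0 t ∂μ 0) *
            ∫⁻ y : Fin n → ℝ, ∏ j, f ((0 : Fin (n+1)).succAbove j) (y j)
              ∂(Measure.pi fun j => μ ((0 : Fin (n+1)).succAbove j)) :=
      lintegral_prod_mul (hf 0).aemeasurable
        (Finset.measurable_prod _ fun j _ => (hf _).comp (measurable_pi_apply j)).aemeasurable
    have h3 := ih (fun j => μ ((0 : Fin (n+1)).succAbove j)) (fun j => inferInstance)
      (fun j => f ((0 : Fin (n+1)).succAbove j)) (fun j => hf _)
    rw [key, h2, h3, Fin.prod_univ_succAbove (fun i => ∫⁻ t, f i t ∂(μ i)) 0]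

lemma pi_withDensity {n : ℕ} (μ : Fin n → Measure ℝ) [∀ i, SigmaFinite (μ i)]
    (f : Fin n → ℝ → ℝ≥0∞) (hf : ∀ i, Measurable (f i))
    (hσ : ∀ i, SigmaFinite ((μ i).withDensity (f i))) :
    Measure.pi (fun i => (μ i).withDensity (f i))
      = (Measure.pi μ).withDensity (fun x => ∏ i, f i (x i)) := by
  haveI := hσ
  refine Measure.pi_eq (μ := fun i => (μ i).withDensity (f i))
    (μ' := (Measure.pi μ).withDensity (fun x => ∏ i, f i (x i))) (fun s hs => ?_)
  rw [withDensity_apply _ (MeasurableSet.univ_pi hs), ← lintegral_indicator (MeasurableSet.univ_pi hs)]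
  have hind : ∀ x : Fin n → ℝ, (Set.univ.pi s).indicator (fun x => ∏ i, f i (x i)) x
      = ∏ i, (s i).indicator (f i) (x i) := by
    intro x
    by_cases hx : x ∈ Set.univ.pi s
    · rw [Set.indicator_of_mem hx]
      exact Finset.prod_congr rfl fun i _ =>
        (Set.indicator_of_mem (hx i trivial) _).symm
    · rw [Set.indicator_of_notMem hx]
      rw [Set.mem_univ_pi] at hx
      push_neg at hx
      obtain ⟨i, hi⟩ := hx
      exact (Finset.prod_eq_zero (Finset.mem_univ i) (Set.indicator_of_notMem hi _)).symm
  calc ∫⁻ x, (Set.univ.pi s).indicator (fun x => ∏ i, f i (x i)) x ∂Measure.pi μ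
      = ∫⁻ x, ∏ i, (s i).indicator (f i) (x i) ∂Measure.pi μ := by simp_rw [hind]
    _ = ∏ i, ∫⁻ t, (s i).indicator (f i) t ∂μ i :=
        lintegral_pi_prod μ (fun i => inferInstance) _ (fun i => (hf i).indicator (hs i))
    _ = ∏ i, ((μ i).withDensity (f i)) (s i) := Finset.prod_congr rfl fun i _ => by
        rw [lintegral_indicator (hs i), withDensity_apply _ (hs i)]

lemma map_withDensity_equiv (e : Ω ≃ᵐ Ω') (μ : Measure Ω) {g : Ω → ℝ≥0∞} (hg : Measurable g) :
    Measure.map e (μ.withDensity g) = (Measure.map e μ).withDensity (fun y => g (e.symm y)) := by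
  ext s hs
  rw [Measure.map_apply e.measurable hs, withDensity_apply _ (e.measurable hs),
    withDensity_apply _ hs]
  have hf : Measurable fun y => g (e.symm y) := hg.comp e.symm.measurable
  rw [setLIntegral_map hs hf e.measurable]
  simp only [MeasurableEquiv.symm_apply_apply]

lemma prod_gaussianPDF {d : ℕ} (y : EuclideanSpace ℝ (Fin d)) :
    (∏ i, gaussianPDF 0 1 (y i)) =
      ENNReal.ofReal ((Real.sqrt (2 * Real.pi))⁻¹ ^ d * Real.exp (-‖y‖ ^ 2 / 2)) := by
  have hy : ‖y‖ ^ 2 = ∑ i, (y i) ^ 2 := by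
    rw [EuclideanSpace.norm_eq, Real.sq_sqrt (Finset.sum_nonneg fun i _ => sq_nonneg _)]
    simp [Real.norm_eq_abs, sq_abs]
  simp only [gaussianPDF]
  rw [← ENNReal.ofReal_prod_of_nonneg (fun i _ => gaussianPDFReal_nonneg 0 1 (y i))]
  congr 1
  simp only [gaussianPDFReal, NNReal.coe_one, mul_one, sub_zero]
  rw [Finset.prod_mul_distrib, Finset.prod_const, ← Real.exp_sum, Finset.card_univ,
    Fintype.card_fin]
  congr 1
  rw [hy]
  rw [neg_div, ← Finset.sum_div]
  simp [neg_div]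

lemma map_rotation_gaussian {d : ℕ}
    (L : EuclideanSpace ℝ (Fin d) ≃ₗᵢ[ℝ] EuclideanSpace ℝ (Fin d)) :
    Measure.map (fun x : Fin d → ℝ =>
        (MeasurableEquiv.toLp 2 (Fin d → ℝ)).symm (L (((MeasurableEquiv.toLp 2 (Fin d → ℝ)).symm).symm x)))
      (Measure.pi fun _ : Fin d => gaussianReal 0 1)
      = Measure.pi fun _ : Fin d => gaussianReal 0 1 := by
  set κ := (MeasurableEquiv.toLp 2 (Fin d → ℝ)).symm with hκ
  set γ := Measure.pi fun _ : Fin d => gaussianReal 0 1 with hγdef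
  have hDmeas : Measurable fun x : Fin d → ℝ => ∏ i, gaussianPDF 0 1 (x i) :=
    Finset.measurable_prod _ fun i _ => (measurable_gaussianPDF 0 1).comp (measurable_pi_apply i)
  have hγ : γ = (volume : Measure (Fin d → ℝ)).withDensity
      (fun x => ∏ i, gaussianPDF 0 1 (x i)) := by
    have h1 : (gaussianReal 0 1 : Measure ℝ) = volume.withDensity (gaussianPDF 0 1) :=
      gaussianReal_of_var_ne_zero 0 one_ne_zero
    have h2 : ∀ _i : Fin d, SigmaFinite ((volume : Measure ℝ).withDensity (gaussianPDF 0 1)) :=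
      fun _ => by rw [← h1]; infer_instance
    calc γ = Measure.pi (fun _ : Fin d => (volume : Measure ℝ).withDensity (gaussianPDF 0 1)) := by
            rw [hγdef, h1]
      _ = (Measure.pi fun _ : Fin d => (volume : Measure ℝ)).withDensity
            (fun x => ∏ i, gaussianPDF 0 1 (x i)) :=
          pi_withDensity _ _ (fun _ => measurable_gaussianPDF 0 1) h2
      _ = (volume : Measure (Fin d → ℝ)).withDensity (fun x => ∏ i, gaussianPDF 0 1 (x i)) := by
          rw [← volume_pi]
  have hρ : Measure.map (⇑κ.symm) γ
      = (volume : Measure (EuclideanSpace ℝ (Fin d))).withDensity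
          (fun y => ENNReal.ofReal ((Real.sqrt (2 * Real.pi))⁻¹ ^ d * Real.exp (-‖y‖ ^ 2 / 2))) := by
    have hvol : Measure.map (⇑κ.symm) (volume : Measure (Fin d → ℝ)) = volume :=
      (MeasurePreserving.symm κ (EuclideanSpace.volume_preserving_symm_measurableEquiv_toLp (Fin d))).map_eq
    rw [hγ, map_withDensity_equiv _ _ hDmeas, hvol]
    congr 1
    funext y
    simp only [MeasurableEquiv.symm_symm]
    exact prod_gaussianPDF y
  have hLmeas : Measurable (⇑L : EuclideanSpace ℝ (Fin d) → EuclideanSpace ℝ (Fin d)) :=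
    L.continuous.measurable
  have hnormmeas : Measurable fun y : EuclideanSpace ℝ (Fin d) =>
      ENNReal.ofReal ((Real.sqrt (2 * Real.pi))⁻¹ ^ d * Real.exp (-‖y‖ ^ 2 / 2)) := by
    apply ENNReal.measurable_ofReal.comp
    exact (measurable_const.mul ((measurable_norm.pow measurable_const).neg.div_const 2).exp)
  have hLρ : Measure.map (⇑L) (Measure.map (⇑κ.symm) γ) = Measure.map (⇑κ.symm) γ := by
    rw [hρ]
    calc Measure.map (⇑L) ((volume : Measure (EuclideanSpace ℝ (Fin d))).withDensity
            (fun y => ENNReal.ofReal ((Real.sqrt (2 * Real.pi))⁻¹ ^ d * Real.exp (-‖y‖ ^ 2 / 2))))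
        = (Measure.map (⇑L.toMeasurableEquiv) volume).withDensity
            (fun y => ENNReal.ofReal
              ((Real.sqrt (2 * Real.pi))⁻¹ ^ d * Real.exp (-‖L.toMeasurableEquiv.symm y‖ ^ 2 / 2))) :=
          map_withDensity_equiv L.toMeasurableEquiv _ hnormmeas
      _ = (volume : Measure (EuclideanSpace ℝ (Fin d))).withDensity
            (fun y => ENNReal.ofReal ((Real.sqrt (2 * Real.pi))⁻¹ ^ d * Real.exp (-‖y‖ ^ 2 / 2))) := by
          rw [show Measure.map (⇑L.toMeasurableEquiv) (volume : Measure (EuclideanSpace ℝ (Fin d)))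
              = volume from L.measurePreserving.map_eq]
          congr 1
          funext y
          rw [show ‖L.toMeasurableEquiv.symm y‖ = ‖y‖ from L.symm.norm_map y]
  calc Measure.map (fun x : Fin d → ℝ => κ (L (κ.symm x))) γ
      = Measure.map (⇑κ) (Measure.map (⇑L) (Measure.map (⇑κ.symm) γ)) := by
        rw [Measure.map_map κ.measurable hLmeas,
          Measure.map_map (κ.measurable.comp hLmeas) κ.symm.measurable]
        rfl
    _ = Measure.map (⇑κ) (Measure.map (⇑κ.symm) γ) := by rw [hLρ]
    _ = γ := by
        rw [Measure.map_map κ.measurable κ.symm.measurable]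
        have h : (⇑κ ∘ ⇑κ.symm) = id := funext fun x => κ.apply_symm_apply x
        rw [h, Measure.map_id]

lemma map_affine_gaussian {σ : ℝ} (hσ : 0 < σ) (m t : ℝ) :
    (gaussianReal t 1).map (fun x => σ * x + m) = gaussianReal (σ * t + m) (σ ^ 2).toNNReal := by
  have h1 : (fun x : ℝ => σ * x + m) = (fun x => x + m) ∘ (fun x => σ * x) := rfl
  have hm1 : Measurable fun x : ℝ => x + m := measurable_id.add_const m
  rw [h1, ← Measure.map_map hm1 (measurable_const_mul σ),
    gaussianReal_map_const_mul, gaussianReal_map_add_const]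
  congr 1
  refine NNReal.coe_injective ?_
  push_cast
  rw [Real.coe_toNNReal _ (sq_nonneg σ)]
  ring

lemma map_affine_gaussian_inv {σ : ℝ} (hσ : 0 < σ) (m t : ℝ) :
    (gaussianReal (σ * t + m) (σ ^ 2).toNNReal).map (fun x => (x - m) / σ)
      = gaussianReal t 1 := by
  have hne : σ ≠ 0 := ne_of_gt hσ
  have h1 : (fun x : ℝ => (x - m) / σ) = (fun x => x + (-(m / σ))) ∘ (fun x => σ⁻¹ * x) := by
    funext x
    simp only [Function.comp_apply]
    field_simp
    ring
  have hm1 : Measurable fun x : ℝ => x + -(m / σ) := measurable_id.add_const _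
  rw [h1, ← Measure.map_map hm1 (measurable_const_mul σ⁻¹),
    gaussianReal_map_const_mul, gaussianReal_map_add_const]
  have hmean : σ⁻¹ * (σ * t + m) + -(m / σ) = t := by field_simp; ring
  rw [hmean]
  congr 1
  refine NNReal.coe_injective ?_
  push_cast
  rw [Real.coe_toNNReal _ (sq_nonneg σ)]
  field_simp

end Gauss

end IsoGaussAux

/-- The trade-off function between two shifted isotropic Gaussians on `ℝ^d` is Gaussian:
`T(N(a, σ²I_d), N(b, σ²I_d)) = G_{‖a−b‖₂/σ}` on `[0,1]`. -/
theorem isotropic_gaussian_tradeoff {d : ℕ} (σ : ℝ) (hσ : 0 < σ) (a b : Fin d → ℝ) :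
    ∀ α ∈ Set.Icc (0 : ℝ) 1,
      tradeoff (Measure.pi fun i => gaussianReal (a i) (σ ^ 2).toNNReal)
        (Measure.pi fun i => gaussianReal (b i) (σ ^ 2).toNNReal) α
        = Gtrade (Real.sqrt (∑ i, (a i - b i) ^ 2) / σ) α := by
  intro α hα
  obtain ⟨hα0, hα1⟩ := hα
  classical
  by_cases hab : a = b
  · subst hab
    have h2 : Real.sqrt (∑ i, (a i - a i) ^ 2) / σ = 0 := by simp
    rw [h2]
    unfold Gtrade
    rw [IsoGaussAux.tradeoff_self _ hα0 hα1, IsoGaussAux.tradeoff_self _ hα0 hα1]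
  · obtain ⟨i₀, hi₀⟩ := Function.ne_iff.mp hab
    obtain ⟨n, rfl⟩ : ∃ n, d = n + 1 := ⟨d - 1, by have := i₀.pos; omega⟩
    set c : ℝ := Real.sqrt (∑ i, (a i - b i) ^ 2) with hc
    have hsum_pos : 0 < ∑ i, (a i - b i) ^ 2 := by
      refine Finset.sum_pos' (fun i _ => sq_nonneg _) ⟨i₀, Finset.mem_univ _, ?_⟩
      have h := sub_ne_zero.mpr hi₀
      positivity
    have hc_pos : 0 < c := Real.sqrt_pos.mpr hsum_pos
    have hμ0_pos : 0 < c / σ := div_pos hc_pos hσ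
    have hbi : ∀ i, σ * ((b i - a i) / σ) + a i = b i := fun i => by field_simp; ring
    -- Step 1: affine reduction to standard gaussians
    have hfP : MeasurePreserving (fun x : Fin (n+1) → ℝ => fun i => σ * x i + a i)
        (Measure.pi fun _ : Fin (n+1) => gaussianReal 0 1)
        (Measure.pi fun i => gaussianReal (a i) (σ ^ 2).toNNReal) :=
      measurePreserving_pi _ _ (fun i =>
        ⟨show Measurable fun t : ℝ => σ * t + a i by fun_prop, by
          simpa using IsoGaussAux.map_affine_gaussian hσ (a i) 0⟩)
    have hfQ : MeasurePreserving (fun x : Fin (n+1) → ℝ => fun i => σ * x i + a i)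
        (Measure.pi fun i => gaussianReal ((b i - a i) / σ) 1)
        (Measure.pi fun i => gaussianReal (b i) (σ ^ 2).toNNReal) :=
      measurePreserving_pi _ _ (fun i =>
        ⟨show Measurable fun t : ℝ => σ * t + a i by fun_prop, by
          rw [IsoGaussAux.map_affine_gaussian hσ (a i) ((b i - a i) / σ), hbi i]⟩)
    have hgP : MeasurePreserving (fun x : Fin (n+1) → ℝ => fun i => (x i - a i) / σ)
        (Measure.pi fun i => gaussianReal (a i) (σ ^ 2).toNNReal)
        (Measure.pi fun _ : Fin (n+1) => gaussianReal 0 1) :=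
      measurePreserving_pi _ _ (fun i =>
        ⟨show Measurable fun t : ℝ => (t - a i) / σ by fun_prop, by
          simpa using IsoGaussAux.map_affine_gaussian_inv hσ (a i) 0⟩)
    have hgQ : MeasurePreserving (fun x : Fin (n+1) → ℝ => fun i => (x i - a i) / σ)
        (Measure.pi fun i => gaussianReal (b i) (σ ^ 2).toNNReal)
        (Measure.pi fun i => gaussianReal ((b i - a i) / σ) 1) :=
      measurePreserving_pi _ _ (fun i =>
        ⟨show Measurable fun t : ℝ => (t - a i) / σ by fun_prop, by
          have h := IsoGaussAux.map_affine_gaussian_inv hσ (a i) ((b i - a i) / σ)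
          rwa [hbi i] at h⟩)
    have step1 : tradeoff (Measure.pi fun _ : Fin (n+1) => gaussianReal 0 1)
          (Measure.pi fun i => gaussianReal ((b i - a i) / σ) 1) α
        = tradeoff (Measure.pi fun i => gaussianReal (a i) (σ ^ 2).toNNReal)
            (Measure.pi fun i => gaussianReal (b i) (σ ^ 2).toNNReal) α :=
      IsoGaussAux.tradeoff_congr_of_mp hfP hfQ hgP hgQ hα0 hα1
    -- Step 2: rotation
    set κ := (MeasurableEquiv.toLp 2 (Fin (n+1) → ℝ)).symm with hκ
    set wv : EuclideanSpace ℝ (Fin (n+1)) := κ.symm (fun i => (b i - a i) / σ) with hwv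
    set tgt : EuclideanSpace ℝ (Fin (n+1)) :=
      (c / σ) • EuclideanSpace.single (0 : Fin (n+1)) (1 : ℝ) with htgt
    have hwnorm : ‖wv‖ = c / σ := by
      have hcoord : ∀ i, wv i = (b i - a i) / σ := fun i => rfl
      rw [EuclideanSpace.norm_eq]
      have hsq : ∀ i, ‖wv i‖ ^ 2 = (a i - b i) ^ 2 / σ ^ 2 := by
        intro i
        rw [hcoord, Real.norm_eq_abs, sq_abs, div_pow]
        congr 1
        ring
      rw [Finset.sum_congr rfl (fun i _ => hsq i), ← Finset.sum_div,
        Real.sqrt_div (Finset.sum_nonneg fun i _ => sq_nonneg _), Real.sqrt_sq hσ.le, ← hc]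
    have htgtnorm : ‖tgt‖ = c / σ := by
      rw [htgt, norm_smul, EuclideanSpace.norm_single, norm_one, mul_one, Real.norm_eq_abs,
        abs_of_pos hμ0_pos]
    set L : EuclideanSpace ℝ (Fin (n+1)) ≃ₗᵢ[ℝ] EuclideanSpace ℝ (Fin (n+1)) :=
      Submodule.reflection (ℝ ∙ (wv - tgt))ᗮ with hLdef
    have hL : L wv = tgt := Submodule.reflection_sub (by rw [hwnorm, htgtnorm])
    have hLsymm : L.symm tgt = wv := by rw [← hL]; exact L.symm_apply_apply _
    have hmvec : ∀ i, tgt i = if i = 0 then c / σ else 0 := by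
      intro i
      rw [htgt]
      simp [EuclideanSpace.single_apply, mul_ite]
    have hF0 : Measure.map (fun x : Fin (n+1) → ℝ => κ (L (κ.symm x)))
        (Measure.pi fun _ : Fin (n+1) => gaussianReal 0 1)
        = Measure.pi fun _ : Fin (n+1) => gaussianReal 0 1 :=
      IsoGaussAux.map_rotation_gaussian L
    have hG0 : Measure.map (fun x : Fin (n+1) → ℝ => κ (L.symm (κ.symm x)))
        (Measure.pi fun _ : Fin (n+1) => gaussianReal 0 1)
        = Measure.pi fun _ : Fin (n+1) => gaussianReal 0 1 :=
      IsoGaussAux.map_rotation_gaussian L.symm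
    have hFmeas : Measurable (fun x : Fin (n+1) → ℝ => κ (L (κ.symm x))) :=
      κ.measurable.comp (L.continuous.measurable.comp κ.symm.measurable)
    have hGmeas : Measurable (fun x : Fin (n+1) → ℝ => κ (L.symm (κ.symm x))) :=
      κ.measurable.comp (L.symm.continuous.measurable.comp κ.symm.measurable)
    have haddw : MeasurePreserving (fun x : Fin (n+1) → ℝ => fun i => x i + (b i - a i) / σ)
        (Measure.pi fun _ : Fin (n+1) => gaussianReal 0 1)
        (Measure.pi fun i => gaussianReal ((b i - a i) / σ) 1) :=
      measurePreserving_pi _ _ (fun i => ⟨measurable_id.add_const _, by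
        simpa using gaussianReal_map_add_const (μ := 0) (v := 1) ((b i - a i) / σ)⟩)
    have haddm : MeasurePreserving (fun x : Fin (n+1) → ℝ => fun i => x i + tgt i)
        (Measure.pi fun _ : Fin (n+1) => gaussianReal 0 1)
        (Measure.pi fun i => gaussianReal (tgt i) 1) :=
      measurePreserving_pi _ _ (fun i => ⟨measurable_id.add_const _, by
        simpa using gaussianReal_map_add_const (μ := 0) (v := 1) (tgt i)⟩)
    have hcomm : (fun x : Fin (n+1) → ℝ => κ (L (κ.symm x))) ∘ (fun x => fun i => x i + (b i - a i) / σ)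
        = (fun x => fun i => x i + tgt i) ∘ (fun x : Fin (n+1) → ℝ => κ (L (κ.symm x))) := by
      funext x
      funext i
      show (L (κ.symm fun j => x j + (b j - a j) / σ)) i = (L (κ.symm x)) i + tgt i
      have hadd : (κ.symm fun j => x j + (b j - a j) / σ) = κ.symm x + wv := rfl
      rw [hadd, L.map_add, hL]
      rfl
    have hcommG : (fun x : Fin (n+1) → ℝ => κ (L.symm (κ.symm x))) ∘ (fun x => fun i => x i + tgt i)
        = (fun x => fun i => x i + (b i - a i) / σ) ∘ (fun x : Fin (n+1) → ℝ => κ (L.symm (κ.symm x))) := by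
      funext x
      funext i
      show (L.symm (κ.symm fun j => x j + tgt j)) i = (L.symm (κ.symm x)) i + (b i - a i) / σ
      have hadd : (κ.symm fun j => x j + tgt j) = κ.symm x + tgt := rfl
      rw [hadd, L.symm.map_add, hLsymm]
      rfl
    have hFw : Measure.map (fun x : Fin (n+1) → ℝ => κ (L (κ.symm x)))
          (Measure.pi fun i => gaussianReal ((b i - a i) / σ) 1)
        = Measure.pi fun i => gaussianReal (tgt i) 1 := by
      rw [← haddw.map_eq, Measure.map_map hFmeas haddw.measurable, hcomm,
        ← Measure.map_map haddm.measurable hFmeas, hF0, haddm.map_eq]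
    have hGm : Measure.map (fun x : Fin (n+1) → ℝ => κ (L.symm (κ.symm x)))
          (Measure.pi fun i => gaussianReal (tgt i) 1)
        = Measure.pi fun i => gaussianReal ((b i - a i) / σ) 1 := by
      rw [← haddm.map_eq, Measure.map_map hGmeas haddm.measurable, hcommG,
        ← Measure.map_map haddw.measurable hGmeas, hG0, haddw.map_eq]
    have step2 : tradeoff (Measure.pi fun _ : Fin (n+1) => gaussianReal 0 1)
          (Measure.pi fun i => gaussianReal ((b i - a i) / σ) 1) α
        = tradeoff (Measure.pi fun _ : Fin (n+1) => gaussianReal 0 1)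
            (Measure.pi fun i => gaussianReal (tgt i) 1) α :=
      IsoGaussAux.tradeoff_congr_of_mp ⟨hFmeas, hF0⟩ ⟨hFmeas, hFw⟩ ⟨hGmeas, hG0⟩ ⟨hGmeas, hGm⟩ hα0 hα1
    -- Step 3: split off the first coordinate
    have hsplit0 : MeasurePreserving (⇑(MeasurableEquiv.piFinSuccAbove (fun _ : Fin (n+1) => ℝ) 0))
        (Measure.pi fun _ : Fin (n+1) => gaussianReal 0 1)
        ((gaussianReal 0 1).prod (Measure.pi fun _ : Fin n => gaussianReal 0 1)) :=
      measurePreserving_piFinSuccAbove (fun _ : Fin (n+1) => gaussianReal 0 1) 0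
    have hsplitm : MeasurePreserving (⇑(MeasurableEquiv.piFinSuccAbove (fun _ : Fin (n+1) => ℝ) 0))
        (Measure.pi fun i => gaussianReal (tgt i) 1)
        ((gaussianReal (c / σ) 1).prod (Measure.pi fun _ : Fin n => gaussianReal 0 1)) := by
      have h := measurePreserving_piFinSuccAbove (fun i : Fin (n+1) => gaussianReal (tgt i) 1) 0
      have h1 : gaussianReal (tgt 0) 1 = gaussianReal (c / σ) 1 := by rw [hmvec 0]; simp
      have h2 : (fun j : Fin n => gaussianReal (tgt ((0 : Fin (n+1)).succAbove j)) 1)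
          = fun _ : Fin n => gaussianReal 0 1 := by
        funext j
        rw [hmvec _, if_neg (Fin.succAbove_ne (0 : Fin (n+1)) j)]
      rw [h1, h2] at h
      exact h
    have step3 : tradeoff (Measure.pi fun _ : Fin (n+1) => gaussianReal 0 1)
          (Measure.pi fun i => gaussianReal (tgt i) 1) α
        = tradeoff ((gaussianReal 0 1).prod (Measure.pi fun _ : Fin n => gaussianReal 0 1))
            ((gaussianReal (c / σ) 1).prod (Measure.pi fun _ : Fin n => gaussianReal 0 1)) α :=
      IsoGaussAux.tradeoff_congr_of_mp hsplit0 hsplitm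
        (MeasurePreserving.symm (MeasurableEquiv.piFinSuccAbove (fun _ : Fin (n+1) => ℝ) 0) hsplit0)
        (MeasurePreserving.symm (MeasurableEquiv.piFinSuccAbove (fun _ : Fin (n+1) => ℝ) 0) hsplitm)
        hα0 hα1
    have step4 : tradeoff ((gaussianReal 0 1).prod (Measure.pi fun _ : Fin n => gaussianReal 0 1))
          ((gaussianReal (c / σ) 1).prod (Measure.pi fun _ : Fin n => gaussianReal 0 1)) α
        = tradeoff (gaussianReal 0 1) (gaussianReal (c / σ) 1) α :=
      IsoGaussAux.tradeoff_prod _ _ _ hα0 hα1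
    calc tradeoff (Measure.pi fun i => gaussianReal (a i) (σ ^ 2).toNNReal)
          (Measure.pi fun i => gaussianReal (b i) (σ ^ 2).toNNReal) α
        = tradeoff (Measure.pi fun _ : Fin (n+1) => gaussianReal 0 1)
            (Measure.pi fun i => gaussianReal ((b i - a i) / σ) 1) α := step1.symm
      _ = tradeoff (Measure.pi fun _ : Fin (n+1) => gaussianReal 0 1)
            (Measure.pi fun i => gaussianReal (tgt i) 1) α := step2
      _ = tradeoff ((gaussianReal 0 1).prod (Measure.pi fun _ : Fin n => gaussianReal 0 1))
            ((gaussianReal (c / σ) 1).prod (Measure.pi fun _ : Fin n => gaussianReal 0 1)) α := step3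
      _ = tradeoff (gaussianReal 0 1) (gaussianReal (c / σ) 1) α := step4
      _ = Gtrade (c / σ) α := rfl
end

section
/- Let Δ, σ > 0, ε ≥ 0, and let P = N(0, σ²) and Q = N(Δ, σ²) be Gaussian measures on ℝ. If δ ≥ Φ(Δ/(2σ) − εσ/Δ) − e^ε Φ(−Δ/(2σ) − εσ/Δ), where Φ is the cumulative distribution function of N(0,1), then for every measurable set S ⊆ ℝ both P(S) ≤ e^ε Q(S) + δ and Q(S) ≤ e^ε P(S) + δ hold; consequently a one-dimensional Gaussian mechanism D ↦ N(q(D), σ²) for a query q with |q(D) − q(D′)| ≤ Δ on adjacent datasets is (ε,δ)-differentially private. -/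
open MeasureTheory ProbabilityTheory
open scoped ProbabilityTheory NNReal ENNReal

section Aux
open Set

noncomputable def stdPhi : ℝ → ℝ := fun x => cdf (gaussianReal 0 1) x

lemma continuous_gaussianPDFReal (m : ℝ) (v : ℝ≥0) : Continuous (gaussianPDFReal m v) := by
  unfold gaussianPDFReal
  fun_prop

lemma stdPhi_eq_integral (x : ℝ) :
    stdPhi x = ∫ t in Iic x, gaussianPDFReal 0 1 t := by
  rw [stdPhi, cdf_eq_real, measureReal_def, gaussianReal_apply_eq_integral _ one_ne_zero,
    ENNReal.toReal_ofReal]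
  exact setIntegral_nonneg measurableSet_Iic fun t _ => gaussianPDFReal_nonneg _ _ _

lemma hasDerivAt_stdPhi (x : ℝ) : HasDerivAt stdPhi (gaussianPDFReal 0 1 x) x := by
  have hint := integrable_gaussianPDFReal 0 1
  have h0 : stdPhi = fun u => (∫ t in Iic (0:ℝ), gaussianPDFReal 0 1 t)
      + ∫ t in (0:ℝ)..u, gaussianPDFReal 0 1 t := by
    funext u
    rw [stdPhi_eq_integral, ← intervalIntegral.integral_Iic_sub_Iic hint.integrableOn
      hint.integrableOn]
    ring
  rw [h0]
  refine HasDerivAt.const_add _ ?_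
  exact intervalIntegral.integral_hasDerivAt_right hint.intervalIntegrable
    ((continuous_gaussianPDFReal 0 1).stronglyMeasurable.stronglyMeasurableAtFilter)
    (continuous_gaussianPDFReal 0 1).continuousAt

lemma stdPhi_nonneg (x : ℝ) : 0 ≤ stdPhi x := cdf_nonneg _ _

lemma stdPhi_le_one (x : ℝ) : stdPhi x ≤ 1 := cdf_le_one _ _

lemma gauss_map_neg (m : ℝ) (v : ℝ≥0) :
    Measure.map (fun x : ℝ => -x) (gaussianReal m v) = gaussianReal (-m) v := by
  have h := gaussianReal_map_const_mul (μ := m) (v := v) (-1)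
  have h2 : (fun x : ℝ => -1 * x) = (fun x : ℝ => -x) := by funext x; ring
  rw [show ((-1:ℝ)) * m = -m by ring] at h
  have h3 : (NNReal.mk ((-1:ℝ)^2) (sq_nonneg _) : ℝ≥0) = 1 := by ext; norm_num
  rw [h3, one_mul] at h
  rw [← h, h2]

lemma gauss_null_singleton (m : ℝ) {v : ℝ≥0} (hv : v ≠ 0) (x : ℝ) :
    gaussianReal m v {x} = 0 :=
  gaussianReal_absolutelyContinuous m hv (measure_singleton x)

lemma stdPhi_neg (x : ℝ) : stdPhi (-x) = 1 - stdPhi x := by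
  have hmap := gauss_map_neg 0 1
  rw [neg_zero] at hmap
  have h1 : gaussianReal 0 1 (Iic (-x)) = gaussianReal 0 1 (Ici x) := by
    conv_lhs => rw [← hmap]
    rw [Measure.map_apply measurable_neg measurableSet_Iic]
    congr 1
    ext y
    simp
  have h2 : gaussianReal 0 1 (Ici x) = gaussianReal 0 1 (Ioi x) := by
    rw [← Ioi_union_left, measure_union (by simp) (measurableSet_singleton x),
      gauss_null_singleton _ one_ne_zero x, add_zero]
  have h3 : gaussianReal 0 1 (Ioi x) = 1 - gaussianReal 0 1 (Iic x) := by
    rw [← compl_Iic, measure_compl measurableSet_Iic (measure_ne_top _ _), measure_univ]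
  have hle : gaussianReal 0 1 (Iic x) ≤ 1 := prob_le_one
  unfold stdPhi
  rw [cdf_eq_real, measureReal_def, cdf_eq_real, measureReal_def, h1, h2, h3, ENNReal.toReal_sub_of_le hle ENNReal.one_ne_top,
    ENNReal.toReal_one]

lemma gauss_map_affine (σ m : ℝ) :
    Measure.map (fun x => σ * x + m) (gaussianReal 0 1) = gaussianReal m (σ^2).toNNReal := by
  have h1 := gaussianReal_map_const_mul (μ := (0:ℝ)) (v := 1) σ
  have h3 : (NNReal.mk (σ^2) (sq_nonneg _) : ℝ≥0) * 1 = (σ^2).toNNReal := by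
    ext; simp [Real.coe_toNNReal _ (sq_nonneg σ)]
  rw [h3, mul_zero] at h1
  have h4 : (fun x : ℝ => σ * x + m) = (fun x : ℝ => x + m) ∘ (fun x : ℝ => σ * x) := rfl
  rw [h4, ← Measure.map_map (measurable_add_const m) (measurable_const_mul σ), h1,
    gaussianReal_map_add_const, zero_add]

lemma gauss_Iic {σ : ℝ} (hσ : 0 < σ) (m t : ℝ) :
    gaussianReal m (σ^2).toNNReal (Iic t) = ENNReal.ofReal (stdPhi ((t-m)/σ)) := by
  rw [← gauss_map_affine σ m, Measure.map_apply (by fun_prop) measurableSet_Iic]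
  have hpre : (fun x : ℝ => σ * x + m) ⁻¹' Iic t = Iic ((t-m)/σ) := by
    ext y
    simp only [mem_preimage, mem_Iic, le_div_iff₀ hσ]
    constructor <;> intro <;> linarith
  rw [hpre, ← ofReal_cdf]
  rfl

lemma gauss_Ioi {σ : ℝ} (hσ : 0 < σ) (m t : ℝ) :
    gaussianReal m (σ^2).toNNReal (Ioi t) = ENNReal.ofReal (stdPhi ((m-t)/σ)) := by
  have h := gauss_Iic hσ m t
  rw [← compl_Iic, measure_compl measurableSet_Iic (measure_ne_top _ _), measure_univ, h]
  have h1 : stdPhi ((m-t)/σ) = 1 - stdPhi ((t-m)/σ) := by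
    rw [show (m-t)/σ = -((t-m)/σ) by ring, stdPhi_neg]
  rw [h1, ENNReal.ofReal_sub _ (stdPhi_nonneg _), ENNReal.ofReal_one]

lemma coe_var {σ : ℝ} (hσ : 0 < σ) : ((σ^2).toNNReal : ℝ) = σ^2 :=
  Real.coe_toNNReal _ (sq_nonneg σ)

lemma var_ne_zero {σ : ℝ} (hσ : 0 < σ) : (σ^2).toNNReal ≠ 0 := by
  intro h
  have := coe_var hσ
  rw [h] at this
  simp at this
  nlinarith

lemma pdf_cmp {σ ε m m' : ℝ} (hσ : 0 < σ) (hd : 0 < m - m') (x : ℝ) :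
    Real.exp ε * gaussianPDFReal m' (σ^2).toNNReal x ≤ gaussianPDFReal m (σ^2).toNNReal x
      ↔ (m+m')/2 + σ^2*ε/(m-m') ≤ x := by
  have hc := coe_var hσ
  have hs : (0:ℝ) < 2*σ^2 := by positivity
  simp only [gaussianPDFReal, hc]
  rw [mul_comm (Real.exp ε), mul_assoc, ← Real.exp_add]
  have hpos : 0 < (Real.sqrt (2*Real.pi*σ^2))⁻¹ := by positivity
  rw [mul_le_mul_iff_right₀ hpos, Real.exp_le_exp]
  rw [show -(x - m')^2/(2*σ^2) + ε = (ε*(2*σ^2) + -(x-m')^2)/(2*σ^2) by field_simp; ring,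
    div_le_div_iff_of_pos_right hs]
  rw [show (m+m')/2 + σ^2*ε/(m-m') = ((m+m')*(m-m') + 2*σ^2*ε)/(2*(m-m')) by
      field_simp,
    div_le_iff₀ (by linarith : (0:ℝ) < 2*(m-m'))]
  have hkey : (x-m')^2 - (x-m)^2 = (m-m')*(2*x-m-m') := by ring
  constructor <;> intro h <;> nlinarith

lemma gauss_Ici {σ : ℝ} (hσ : 0 < σ) (m t : ℝ) :
    gaussianReal m (σ^2).toNNReal (Ici t) = ENNReal.ofReal (stdPhi ((m-t)/σ)) := by
  rw [← Ioi_union_left, measure_union (by simp) (measurableSet_singleton t),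
    gauss_null_singleton _ (var_ne_zero hσ) t, add_zero, gauss_Ioi hσ]

lemma integral_pdf_eq {σ : ℝ} (hσ : 0 < σ) (m : ℝ) {S : Set ℝ} (hS : MeasurableSet S)
    (h : gaussianReal m (σ^2).toNNReal S = ENNReal.ofReal (stdPhi c)) :
    ∫ x in S, gaussianPDFReal m (σ^2).toNNReal x = stdPhi c := by
  rw [gaussianReal_apply_eq_integral _ (var_ne_zero hσ)] at h
  rwa [ENNReal.ofReal_eq_ofReal_iff
    (setIntegral_nonneg hS fun x _ => gaussianPDFReal_nonneg _ _ _) (stdPhi_nonneg _)] at h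

lemma hockey {σ ε : ℝ} (hσ : 0 < σ) (m m' : ℝ) (hd : 0 < m - m') :
    0 ≤ stdPhi ((m-m')/(2*σ) - ε*σ/(m-m'))
        - Real.exp ε * stdPhi (-((m-m')/(2*σ)) - ε*σ/(m-m')) ∧
    ∀ S : Set ℝ, MeasurableSet S →
      ∫ x in S, gaussianPDFReal m (σ^2).toNNReal x
        ≤ Real.exp ε * (∫ x in S, gaussianPDFReal m' (σ^2).toNNReal x)
          + (stdPhi ((m-m')/(2*σ) - ε*σ/(m-m'))
            - Real.exp ε * stdPhi (-((m-m')/(2*σ)) - ε*σ/(m-m'))) := by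
  have hd0 : m - m' ≠ 0 := ne_of_gt hd
  set p := gaussianPDFReal m (σ^2).toNNReal with hp
  set q := gaussianPDFReal m' (σ^2).toNNReal with hq
  set t : ℝ := (m+m')/2 + σ^2*ε/(m-m') with ht
  set g : ℝ → ℝ := fun x => p x - Real.exp ε * q x with hg
  have hpint : Integrable p := integrable_gaussianPDFReal _ _
  have hqint : Integrable q := integrable_gaussianPDFReal _ _
  have hgint : Integrable g := hpint.sub (hqint.const_mul _)
  have hgE : ∀ x, t ≤ x → 0 ≤ g x := fun x hx =>
    sub_nonneg.mpr ((pdf_cmp hσ hd x).mpr hx)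
  have hgEc : ∀ x, x < t → g x ≤ 0 := by
    intro x hx
    refine sub_nonpos.mpr (le_of_lt (not_le.mp fun h => ?_))
    exact absurd ((pdf_cmp hσ hd x).mp h) (not_le.mpr hx)
  have hsplit : ∀ S : Set ℝ, ∫ x in S, g x
      = (∫ x in S, p x) - Real.exp ε * ∫ x in S, q x := by
    intro S
    rw [hg, integral_sub hpint.integrableOn ((hqint.const_mul _).integrableOn),
      MeasureTheory.integral_const_mul]
  have hE : MeasurableSet (Ici t) := measurableSet_Ici
  have hvalp : ∫ x in Ici t, p x = stdPhi ((m-m')/(2*σ) - ε*σ/(m-m')) := by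
    rw [integral_pdf_eq hσ m measurableSet_Ici (gauss_Ici hσ m t),
      show (m - t)/σ = (m-m')/(2*σ) - ε*σ/(m-m') by rw [ht]; field_simp; ring]
  have hvalq : ∫ x in Ici t, q x = stdPhi (-((m-m')/(2*σ)) - ε*σ/(m-m')) := by
    rw [integral_pdf_eq hσ m' measurableSet_Ici (gauss_Ici hσ m' t),
      show (m' - t)/σ = -((m-m')/(2*σ)) - ε*σ/(m-m') by rw [ht]; field_simp; ring]
  have hnn : 0 ≤ ∫ x in Ici t, g x := setIntegral_nonneg hE fun x hx => hgE x hx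
  have hEval : ∫ x in Ici t, g x = stdPhi ((m-m')/(2*σ) - ε*σ/(m-m'))
      - Real.exp ε * stdPhi (-((m-m')/(2*σ)) - ε*σ/(m-m')) := by
    rw [hsplit _, hvalp, hvalq]
  refine ⟨hEval ▸ hnn, fun S hS => ?_⟩
  have h1 : ∫ x in S, g x ≤ ∫ x in Ici t, g x := by
    have hid := integral_inter_add_diff (f := g) (s := S) hE hgint.integrableOn
    have h2 : ∫ x in S \ Ici t, g x ≤ 0 :=
      setIntegral_nonpos (hS.diff hE) fun x hx => hgEc x (not_le.mp hx.2)
    have h3 : ∫ x in S ∩ Ici t, g x ≤ ∫ x in Ici t, g x :=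
      setIntegral_mono_set hgint.integrableOn
        ((ae_restrict_iff' hE).mpr (ae_of_all _ hgE))
        (HasSubset.Subset.eventuallyLE inter_subset_right)
    linarith
  rw [hsplit S, hEval] at h1
  linarith

lemma stdpdf_shift {ε u : ℝ} (hu : u ≠ 0) :
    Real.exp ε * gaussianPDFReal 0 1 (-(u/2) - ε/u) = gaussianPDFReal 0 1 (u/2 - ε/u) := by
  simp only [gaussianPDFReal, NNReal.coe_one, mul_one, sub_zero]
  rw [mul_comm (Real.exp ε), mul_assoc, ← Real.exp_add]
  congr 1
  field_simp
  ring

lemma hasDerivAt_G {ε : ℝ} {u : ℝ} (hu : 0 < u) :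
    HasDerivAt (fun u => stdPhi (u/2 - ε/u) - Real.exp ε * stdPhi (-(u/2) - ε/u))
      (gaussianPDFReal 0 1 (u/2 - ε/u)) u := by
  have hu0 : u ≠ 0 := ne_of_gt hu
  have ha : HasDerivAt (fun u : ℝ => u/2 - ε/u) (1/2 + ε/u^2) u := by
    have h1 : HasDerivAt (fun u : ℝ => u/2) (1/2) u := (hasDerivAt_id u).div_const 2
    have h2 : HasDerivAt (fun u : ℝ => ε/u) (ε * -(u^2)⁻¹) u := by
      simpa [div_eq_mul_inv] using (hasDerivAt_inv hu0).const_mul ε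
    refine (h1.sub h2).congr_deriv ?_
    ring
  have hb : HasDerivAt (fun u : ℝ => -(u/2) - ε/u) (-(1/2) + ε/u^2) u := by
    have h1 : HasDerivAt (fun u : ℝ => -(u/2)) (-(1/2)) u :=
      ((hasDerivAt_id u).div_const 2).neg
    have h2 : HasDerivAt (fun u : ℝ => ε/u) (ε * -(u^2)⁻¹) u := by
      simpa [div_eq_mul_inv] using (hasDerivAt_inv hu0).const_mul ε
    refine (h1.sub h2).congr_deriv ?_
    ring
  have hA := (hasDerivAt_stdPhi (u/2 - ε/u)).comp u ha
  have hB := ((hasDerivAt_stdPhi (-(u/2) - ε/u)).comp u hb).const_mul (Real.exp ε)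
  refine (hA.sub hB).congr_deriv ?_
  rw [show Real.exp ε * (gaussianPDFReal 0 1 (-(u/2) - ε/u) * (-(1/2) + ε/u^2))
      = (Real.exp ε * gaussianPDFReal 0 1 (-(u/2) - ε/u)) * (-(1/2) + ε/u^2) by ring,
    stdpdf_shift hu0]
  field_simp
  ring

lemma G_mono (ε : ℝ) {u U : ℝ} (hu : 0 < u) (huU : u ≤ U) :
    stdPhi (u/2 - ε/u) - Real.exp ε * stdPhi (-(u/2) - ε/u)
      ≤ stdPhi (U/2 - ε/U) - Real.exp ε * stdPhi (-(U/2) - ε/U) := by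
  have hmono : StrictMonoOn
      (fun u => stdPhi (u/2 - ε/u) - Real.exp ε * stdPhi (-(u/2) - ε/u)) (Ioi 0) := by
    refine strictMonoOn_of_deriv_pos (convex_Ioi 0)
      (fun x hx => (hasDerivAt_G (hx : (0:ℝ) < x)).continuousAt.continuousWithinAt) ?_
    intro x hx
    rw [interior_Ioi] at hx
    rw [(hasDerivAt_G hx).deriv]
    exact gaussianPDFReal_pos _ _ _ one_ne_zero
  rcases eq_or_lt_of_le huU with rfl | h
  · exact le_refl _
  · exact le_of_lt (hmono (Set.mem_Ioi.mpr hu) (Set.mem_Ioi.mpr (lt_of_lt_of_le hu huU)) h)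

lemma hconv {σ ε : ℝ} (hσ : 0 < σ) (d : ℝ) (hd : 0 < d) :
    stdPhi (d/(2*σ) - ε*σ/d) - Real.exp ε * stdPhi (-(d/(2*σ)) - ε*σ/d)
      = stdPhi ((d/σ)/2 - ε/(d/σ)) - Real.exp ε * stdPhi (-((d/σ)/2) - ε/(d/σ)) := by
  rw [show (d/σ)/2 = d/(2*σ) by ring, show ε/(d/σ) = ε*σ/d by
    rw [div_div_eq_mul_div]]

lemma key_real_pos {σ ε Δ : ℝ} (hσ : 0 < σ) (hΔ : 0 < Δ) (m m' : ℝ)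
    (hpos : 0 < m - m') (hle : m - m' ≤ Δ) {S : Set ℝ} (hS : MeasurableSet S) :
    ∫ x in S, gaussianPDFReal m (σ^2).toNNReal x
      ≤ Real.exp ε * (∫ x in S, gaussianPDFReal m' (σ^2).toNNReal x)
        + (stdPhi (Δ/(2*σ) - ε*σ/Δ) - Real.exp ε * stdPhi (-(Δ/(2*σ)) - ε*σ/Δ)) := by
  have hk := (hockey (ε := ε) hσ m m' hpos).2 S hS
  have hmono : stdPhi ((m-m')/(2*σ) - ε*σ/(m-m'))
        - Real.exp ε * stdPhi (-((m-m')/(2*σ)) - ε*σ/(m-m'))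
      ≤ stdPhi (Δ/(2*σ) - ε*σ/Δ) - Real.exp ε * stdPhi (-(Δ/(2*σ)) - ε*σ/Δ) := by
    rw [hconv hσ _ hpos, hconv hσ _ hΔ]
    exact G_mono ε (div_pos hpos hσ) (by gcongr)
  linarith

lemma integral_pdf_reflect {σ : ℝ} (hσ : 0 < σ) (m : ℝ) {S : Set ℝ}
    (hS : MeasurableSet S) :
    ∫ x in S, gaussianPDFReal m (σ^2).toNNReal x
      = ∫ x in (fun x : ℝ => -x) ⁻¹' S, gaussianPDFReal (-m) (σ^2).toNNReal x := by
  have h1 : gaussianReal m (σ^2).toNNReal S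
      = gaussianReal (-m) (σ^2).toNNReal ((fun x : ℝ => -x) ⁻¹' S) := by
    conv_lhs => rw [show m = -(-m) by ring, ← gauss_map_neg (-m) (σ^2).toNNReal]
    rw [Measure.map_apply measurable_neg hS]
  rw [gaussianReal_apply_eq_integral _ (var_ne_zero hσ),
    gaussianReal_apply_eq_integral _ (var_ne_zero hσ)] at h1
  rwa [ENNReal.ofReal_eq_ofReal_iff
    (setIntegral_nonneg hS fun x _ => gaussianPDFReal_nonneg _ _ _)
    (setIntegral_nonneg (measurableSet_preimage measurable_neg hS)
      fun x _ => gaussianPDFReal_nonneg _ _ _)] at h1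

lemma key_real {σ ε Δ : ℝ} (hσ : 0 < σ) (hε : 0 ≤ ε) (hΔ : 0 < Δ) (m m' : ℝ)
    (hd : |m - m'| ≤ Δ) {S : Set ℝ} (hS : MeasurableSet S) :
    ∫ x in S, gaussianPDFReal m (σ^2).toNNReal x
      ≤ Real.exp ε * (∫ x in S, gaussianPDFReal m' (σ^2).toNNReal x)
        + (stdPhi (Δ/(2*σ) - ε*σ/Δ) - Real.exp ε * stdPhi (-(Δ/(2*σ)) - ε*σ/Δ)) := by
  rcases lt_trichotomy (m - m') 0 with hneg | h0 | hpos
  · rw [integral_pdf_reflect hσ m hS, integral_pdf_reflect hσ m' hS]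
    refine key_real_pos hσ hΔ (-m) (-m') (by linarith) ?_
      (measurableSet_preimage measurable_neg hS)
    have := abs_sub_comm m m' ▸ hd
    calc -m - -m' = m' - m := by ring
      _ ≤ |m' - m| := le_abs_self _
      _ ≤ Δ := this
  · have h0G := (hockey (ε := ε) hσ Δ 0 (by simpa using hΔ)).1
    simp only [sub_zero] at h0G
    have heq : m = m' := by linarith
    subst heq
    have hbint : 0 ≤ ∫ x in S, gaussianPDFReal m (σ^2).toNNReal x :=
      setIntegral_nonneg hS fun x _ => gaussianPDFReal_nonneg _ _ _
    nlinarith [Real.one_le_exp hε]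
  · exact key_real_pos hσ hΔ m m' hpos (le_trans (le_abs_self _) hd) hS

lemma key_ennreal {σ ε Δ δ : ℝ} (hσ : 0 < σ) (hε : 0 ≤ ε) (hΔ : 0 < Δ)
    (hδ : stdPhi (Δ/(2*σ) - ε*σ/Δ) - Real.exp ε * stdPhi (-(Δ/(2*σ)) - ε*σ/Δ) ≤ δ)
    (m m' : ℝ) (hd : |m - m'| ≤ Δ) {S : Set ℝ} (hS : MeasurableSet S) :
    gaussianReal m (σ^2).toNNReal S
      ≤ ENNReal.ofReal (Real.exp ε) * gaussianReal m' (σ^2).toNNReal S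
        + ENNReal.ofReal δ := by
  have h0G := (hockey (ε := ε) hσ Δ 0 (by simpa using hΔ)).1
  simp only [sub_zero] at h0G
  have hδ0 : 0 ≤ δ := le_trans h0G hδ
  rw [gaussianReal_apply_eq_integral _ (var_ne_zero hσ),
    gaussianReal_apply_eq_integral _ (var_ne_zero hσ)]
  have hb : 0 ≤ ∫ x in S, gaussianPDFReal m' (σ^2).toNNReal x :=
    setIntegral_nonneg hS fun x _ => gaussianPDFReal_nonneg _ _ _
  calc ENNReal.ofReal (∫ x in S, gaussianPDFReal m (σ^2).toNNReal x)
      ≤ ENNReal.ofReal (Real.exp ε * (∫ x in S, gaussianPDFReal m' (σ^2).toNNReal x) + δ) := by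
        refine ENNReal.ofReal_le_ofReal ?_
        have := key_real (ε := ε) hσ hε hΔ m m' hd hS
        linarith
    _ = ENNReal.ofReal (Real.exp ε) * ENNReal.ofReal (∫ x in S, gaussianPDFReal m' (σ^2).toNNReal x)
        + ENNReal.ofReal δ := by
        rw [ENNReal.ofReal_add (by positivity) hδ0, ENNReal.ofReal_mul (Real.exp_nonneg ε)]

end Aux

/-- If `δ ≥ Φ(Δ/(2σ) − εσ/Δ) − e^ε Φ(−Δ/(2σ) − εσ/Δ)`, then the Gaussian measures
`P = N(0,σ²)` and `Q = N(Δ,σ²)` satisfy `P(S) ≤ e^ε Q(S) + δ` and `Q(S) ≤ e^ε P(S) + δ`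
for every measurable `S ⊆ ℝ`; consequently, a one-dimensional Gaussian mechanism
`D ↦ N(q(D), σ²)` for a query `q` with `|q(D) − q(D')| ≤ Δ` on adjacent datasets is
`(ε,δ)`-differentially private. -/
theorem gaussian_mechanism_eps_delta {X : Type*} [MeasurableSpace X] {n : ℕ}
    (Δ σ ε δ : ℝ) (hΔ : 0 < Δ) (hσ : 0 < σ) (hε : 0 ≤ ε)
    (hδ : cdf (gaussianReal 0 1) (Δ / (2 * σ) - ε * σ / Δ)
        - Real.exp ε * cdf (gaussianReal 0 1) (-(Δ / (2 * σ)) - ε * σ / Δ) ≤ δ)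
    (A : Kernel (Fin n → X) ℝ) [IsMarkovKernel A]
    (q : (Fin n → X) → ℝ)
    (hq : ∀ D D' : Fin n → X, Adjacent D D' → |q D - q D'| ≤ Δ)
    (hA : ∀ D, A D = gaussianReal (q D) (σ ^ 2).toNNReal) :
    (∀ S : Set ℝ, MeasurableSet S →
      gaussianReal 0 (σ ^ 2).toNNReal S
          ≤ ENNReal.ofReal (Real.exp ε) * gaussianReal Δ (σ ^ 2).toNNReal S
            + ENNReal.ofReal δ ∧
      gaussianReal Δ (σ ^ 2).toNNReal S
          ≤ ENNReal.ofReal (Real.exp ε) * gaussianReal 0 (σ ^ 2).toNNReal S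
            + ENNReal.ofReal δ) ∧
    (∀ S : Set ℝ, MeasurableSet S → ∀ D D' : Fin n → X, Adjacent D D' →
      A D S ≤ ENNReal.ofReal (Real.exp ε) * A D' S + ENNReal.ofReal δ) := by
  have hδ' : stdPhi (Δ/(2*σ) - ε*σ/Δ) - Real.exp ε * stdPhi (-(Δ/(2*σ)) - ε*σ/Δ) ≤ δ := hδ
  constructor
  · intro S hS
    exact ⟨key_ennreal hσ hε hΔ hδ' 0 Δ (by rw [zero_sub, abs_neg, abs_of_pos hΔ]) hS,
      key_ennreal hσ hε hΔ hδ' Δ 0 (by rw [sub_zero, abs_of_pos hΔ]) hS⟩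
  · intro S hS D D' hadj
    rw [hA D, hA D']
    exact key_ennreal hσ hε hΔ hδ' (q D) (q D') (hq D D' hadj) hS
end
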